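/- arXiv:0909.5482 — 4 statements merged into one kernel-verified Lean document; each statement's English description precedes it below -/
import Mathlib

section
/- Let ε(N) ∈ (0,1) be defined for large N by the condition that the expected partition size under the uniform grandcanonical ensemble equals N^2, i.e., ∑_{m=1}^∞ ε(N)^m/(1-ε(N)^m)^2 = N^2. Then ε(N) = 1 - α/N + O(log N / N^2) as N → ∞, where α = π/√6. -/
set_option maxHeartbeats 1000000

open Real

lemma key_pointwise (x : ℝ) (hx : 0 < x) :
    0 ≤ 1/x^2 - Real.exp (-x)/(1 - Real.exp (-x))^2 ∧
    1/x^2 - Real.exp (-x)/(1 - Real.exp (-x))^2 ≤ min 1 (1/x^2) := by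
  have hv0 : 0 < Real.exp (-x) := Real.exp_pos _
  have hv1 : Real.exp (-x) < 1 := by
    rw [Real.exp_lt_one_iff]; linarith
  set s := Real.sinh (x/2) with hs
  have hspos : x/2 < s := Real.self_lt_sinh_iff.mpr (by linarith)
  have e1 : Real.exp (x/2) * Real.exp (-(x/2)) = 1 := by
    rw [← Real.exp_add]; norm_num
  have h1 : (1 : ℝ) - Real.exp (-x) = 2 * s * Real.exp (-(x/2)) := by
    rw [hs, Real.sinh_eq, show (-x) = (-(x/2)) + (-(x/2)) by ring, Real.exp_add]
    linear_combination -e1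
  have hg : Real.exp (-x)/(1 - Real.exp (-x))^2 = 1/(4*s^2) := by
    rw [h1, show (-x) = (-(x/2)) + (-(x/2)) by ring, Real.exp_add]
    have hsne : s ≠ 0 := by nlinarith
    have hene : Real.exp (-(x/2)) ≠ 0 := (Real.exp_pos _).ne'
    field_simp
    ring
  have hgup : 1/(4*s^2) ≤ 1/x^2 := by
    apply one_div_le_one_div_of_le (by positivity)
    nlinarith
  refine ⟨by rw [hg]; linarith, ?_⟩
  rcases le_or_gt 1 x with h1x | h1x
  · have hm : min 1 (1/x^2) = 1/x^2 := min_eq_right (by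
      rw [div_le_one (by positivity)]; nlinarith)
    rw [hm, hg]
    have : 0 < 1/(4*s^2) := by positivity
    linarith
  · have hmin : min 1 (1/x^2) = 1 := min_eq_left (by
      rw [le_div_iff₀ (by positivity)]; nlinarith)
    rw [hmin]
    set v := Real.exp (-x) with hv
    have hb := Real.exp_bound (x := -x) (by rw [abs_neg, abs_of_pos hx]; linarith) (n := 3) (by norm_num)
    rw [abs_neg, abs_of_pos hx, abs_le] at hb
    have hb1 := hb.1
    simp [Finset.sum_range_succ, Nat.factorial] at hb1
    have hA : 1 - x + x^2/2 - (2/9)*x^3 ≤ v := by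
      rw [hv]; nlinarith [hb1]
    have hne : (1 : ℝ) - v ≠ 0 := by linarith
    rw [div_sub_div _ _ (by positivity : x^2 ≠ 0) (by positivity : ((1:ℝ)-v)^2 ≠ 0),
      div_le_one (by positivity)]
    have hwP : 1 - v ≤ x - x^2/2 + 2/9*x^3 := by linarith
    have hq : 0 ≤ x^2 - x^2*(x - x^2/2 + 2/9*x^3) - (1-x^2)*(x - x^2/2 + 2/9*x^3)^2 := by
      nlinarith [sq_nonneg x, sq_nonneg (1-x), pow_pos hx 3, pow_pos hx 4, pow_pos hx 5,
        mul_pos hx hx, sq_nonneg (x*(1-x)), pow_le_one₀ hx.le h1x.le (n:=2), pow_le_one₀ hx.le h1x.le (n:=3)]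
    have hP : 0 ≤ x - x^2/2 + 2/9*x^3 := by nlinarith
    have hfac : 0 ≤ ((x - x^2/2 + 2/9*x^3) - (1-v)) * (x^2 + (1-x^2)*((x - x^2/2 + 2/9*x^3) + (1-v))) := by
      apply mul_nonneg (by linarith)
      have h2 : 0 ≤ (1-x^2) * ((x - x^2/2 + 2/9*x^3) + (1-v)) :=
        mul_nonneg (by nlinarith) (by linarith)
      nlinarith [sq_nonneg x, h2]
    clear hb hb1 hg hgup h1 e1 hspos hs hmin hv hA hne hwP
    clear_value v s
    nlinarith [add_nonneg hq hfac]

lemma F_eq (t : ℝ) (ht : 0 < t) :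
    ∃ H : ℝ, 0 ≤ H ∧ (t ≤ 1 → H ≤ 3/t) ∧
      ∑' m : ℕ, Real.exp (-(((m:ℝ)+1)*t)) / (1 - Real.exp (-(((m:ℝ)+1)*t)))^2
        = Real.pi^2/6 / t^2 - H := by
  set f1 : ℕ → ℝ := fun m => 1/(((m:ℝ)+1)*t)^2 with hf1
  set gg : ℕ → ℝ := fun m => Real.exp (-(((m:ℝ)+1)*t)) / (1 - Real.exp (-(((m:ℝ)+1)*t)))^2 with hgg
  set hh : ℕ → ℝ := fun m => f1 m - gg m with hhh
  have hx : ∀ m : ℕ, (0:ℝ) < ((m:ℝ)+1)*t := by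
    intro m; positivity
  have hkey := fun m => key_pointwise _ (hx m)
  have hbasel1 : HasSum (fun m : ℕ => (1:ℝ) / ((m:ℝ)+1)^2) (π^2/6) := by
    have h := (hasSum_nat_add_iff' (f := fun n : ℕ => (1:ℝ)/(n:ℝ)^2) 1).mpr hasSum_zeta_two
    norm_num [Finset.sum_range_one] at h
    convert h using 2 with m
    all_goals first | rfl | simp [one_div]
  have hf1sum : HasSum f1 (π^2/6 / t^2) := by
    have h := hbasel1.mul_left (1/t^2)
    convert h using 1 <;> try rfl
    · funext m; rw [hf1]; simp only []; rw [mul_pow]; field_simp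
    · field_simp
  have hhnn : ∀ m, 0 ≤ hh m := fun m => (hkey m).1
  have hhle : ∀ m, hh m ≤ f1 m := fun m => le_trans (hkey m).2 (min_le_right _ _)
  have hhle1 : ∀ m, hh m ≤ 1 := fun m => le_trans (hkey m).2 (min_le_left _ _)
  have hhsum : Summable hh := Summable.of_nonneg_of_le hhnn hhle hf1sum.summable
  refine ⟨∑' m, hh m, tsum_nonneg hhnn, ?_, ?_⟩
  · intro ht1
    set M := Nat.ceil (1/t) with hM
    have hM1 : 1 ≤ M := Nat.one_le_ceil_iff.mpr (by positivity)
    have hM0 : (0:ℝ) < (M:ℝ) := by exact_mod_cast hM1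
    have hMt : 1/t ≤ (M:ℝ) := Nat.le_ceil _
    have h1t : 1 ≤ 1/t := by rw [le_div_iff₀ ht]; linarith
    have hM2 : (M:ℝ) ≤ 2/t := by
      have := Nat.ceil_lt_add_one (le_of_lt (by positivity : (0:ℝ) < 1/t))
      have h2 : (M:ℝ) < 1/t + 1 := by exact_mod_cast this
      calc (M:ℝ) ≤ 1/t + 1 := h2.le
        _ ≤ 1/t + 1/t := by linarith
        _ = 2/t := by ring
    have hMinv : 1/(M:ℝ) ≤ t := by
      rw [div_le_iff₀ hM0]
      calc (1:ℝ) = (1/t) * t := by field_simp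
        _ ≤ (M:ℝ) * t := by apply mul_le_mul_of_nonneg_right hMt ht.le
        _ = t * M := by ring
    -- split the sum
    have hsplit := (Summable.sum_add_tsum_nat_add (f := hh) M hhsum).symm
    have hhead : ∑ m ∈ Finset.range M, hh m ≤ (M:ℝ) := by
      calc ∑ m ∈ Finset.range M, hh m ≤ ∑ m ∈ Finset.range M, (1:ℝ) :=
            Finset.sum_le_sum (fun m _ => hhle1 m)
        _ = (M:ℝ) := by simp
    have htailsum : Summable (fun m => hh (m + M)) := (summable_nat_add_iff M).mpr hhsum
    have htail : ∑' m : ℕ, hh (m + M) ≤ 1/t^2 * (1/(M:ℝ)) := by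
      apply Summable.tsum_le_of_sum_le htailsum
      intro s
      classical
      obtain ⟨n, hn⟩ : ∃ n, s ⊆ Finset.range n := ⟨(s.sup id) + 1, fun i hi =>
        Finset.mem_range.mpr (Nat.lt_succ_of_le (Finset.le_sup (f := id) hi))⟩
      calc ∑ m ∈ s, hh (m + M) ≤ ∑ m ∈ Finset.range n, hh (m + M) :=
            Finset.sum_le_sum_of_subset_of_nonneg hn (fun i _ _ => hhnn _)
        _ ≤ ∑ m ∈ Finset.range n, (1/t^2) * (1/((m:ℝ)+M) - 1/((m:ℝ)+1+M)) := by
            apply Finset.sum_le_sum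
            intro m _
            have hmM : (0:ℝ) < (m:ℝ) + M := by positivity
            have e1 : 1/((m:ℝ)+M) - 1/((m:ℝ)+1+M) = 1/(((m:ℝ)+M)*((m:ℝ)+1+M)) := by
              field_simp; ring
            rw [e1]
            calc hh (m + M) ≤ f1 (m + M) := hhle _
              _ = 1/(((m:ℝ)+1+M)*t)^2 := by simp only [hf1]; push_cast; ring_nf
              _ ≤ (1/t^2) * (1/(((m:ℝ)+M)*((m:ℝ)+1+M))) := by
                  rw [mul_pow, one_div, mul_inv, ← one_div, ← one_div (t^2), mul_comm]
                  apply mul_le_mul_of_nonneg_left _ (by positivity)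
                  apply one_div_le_one_div_of_le (by positivity)
                  nlinarith
        _ = (1/t^2) * (1/((0:ℝ)+M) - 1/((n:ℝ)+M)) := by
            rw [← Finset.mul_sum]
            congr 1
            have := Finset.sum_range_sub' (f := fun m : ℕ => 1/((m:ℝ)+M)) n
            simpa using this
        _ ≤ 1/t^2 * (1/(M:ℝ)) := by
            apply mul_le_mul_of_nonneg_left _ (by positivity)
            have : 0 ≤ 1/((n:ℝ)+M) := by positivity
            simp only [zero_add]
            linarith
    calc ∑' m, hh m = ∑ m ∈ Finset.range M, hh m + ∑' m : ℕ, hh (m + M) := hsplit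
      _ ≤ (M:ℝ) + 1/t^2 * (1/(M:ℝ)) := add_le_add hhead htail
      _ ≤ 2/t + 1/t^2 * t := by
          apply add_le_add hM2
          apply mul_le_mul_of_nonneg_left hMinv (by positivity)
      _ = 3/t := by field_simp; ring
  · have h1 : ∑' m, gg m = ∑' m, (f1 m - hh m) := by
      apply tsum_congr; intro m; rw [hhh]; ring
    rw [h1, Summable.tsum_sub hf1sum.summable hhsum, hf1sum.tsum_eq]

theorem epsilonN_asymptotics_U (ε : ℕ → ℝ) (N₀ : ℕ)
    (hmem : ∀ N ≥ N₀, ε N ∈ Set.Ioo (0 : ℝ) 1)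
    (heq : ∀ N ≥ N₀, ∑' m : ℕ, (ε N) ^ (m + 1) / (1 - (ε N) ^ (m + 1)) ^ 2 = (N : ℝ) ^ 2) :
    (fun N : ℕ => ε N - (1 - (Real.pi / Real.sqrt 6) / N))
      =O[Filter.atTop] (fun N : ℕ => Real.log N / (N : ℝ) ^ 2) := by
  set α : ℝ := Real.pi / Real.sqrt 6 with hα
  have h6 : (0:ℝ) < Real.sqrt 6 := Real.sqrt_pos.mpr (by norm_num)
  have hα2 : α^2 = Real.pi^2/6 := by
    rw [hα, div_pow, Real.sq_sqrt (by norm_num : (6:ℝ) ≥ 0)]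
  have hα1 : 1 ≤ α := by
    rw [hα, le_div_iff₀ h6, one_mul]
    calc Real.sqrt 6 ≤ Real.sqrt 9 := Real.sqrt_le_sqrt (by norm_num)
      _ = 3 := by rw [show (9:ℝ) = 3^2 by norm_num, Real.sqrt_sq (by norm_num)]
      _ ≤ π := Real.pi_gt_three.le
  have hαle2 : α ≤ 2 := by
    rw [hα, div_le_iff₀ h6]
    calc π ≤ 4 := Real.pi_le_four
      _ ≤ 2 * Real.sqrt 6 := by
          nlinarith [Real.sq_sqrt (by norm_num : (6:ℝ) ≥ 0), h6]
  clear_value α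
  rw [Asymptotics.isBigO_iff]
  refine ⟨10, ?_⟩
  rw [Filter.eventually_atTop]
  refine ⟨max N₀ 3, fun N hN => ?_⟩
  have hN0 : N ≥ N₀ := le_trans (le_max_left _ _) hN
  have hN3 : (3:ℝ) ≤ (N:ℝ) := by
    have : (3:ℕ) ≤ N := le_trans (le_max_right _ _) hN
    exact_mod_cast this
  have hNpos : (0:ℝ) < N := by linarith
  obtain ⟨he0, he1⟩ := hmem N hN0
  set t : ℝ := -Real.log (ε N) with htdef
  have htpos : 0 < t := by
    rw [htdef, neg_pos]
    exact Real.log_neg he0 he1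
  have hεt : ε N = Real.exp (-t) := by
    rw [htdef, neg_neg, Real.exp_log he0]
  clear_value t
  -- rewrite heq
  have heqN : Real.pi^2/6 / t^2 - (N:ℝ)^2 ≥ 0 ∧ ∃ H : ℝ, 0 ≤ H ∧ (t ≤ 1 → H ≤ 3/t) ∧
      Real.pi^2/6 / t^2 - H = (N:ℝ)^2 := by
    obtain ⟨H, hH0, hH3, hHeq⟩ := F_eq t htpos
    have heqexp : ∑' m : ℕ, Real.exp (-(((m:ℝ)+1)*t)) / (1 - Real.exp (-(((m:ℝ)+1)*t)))^2
        = (N:ℝ)^2 := by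
      rw [← heq N hN0]
      apply tsum_congr
      intro m
      have : Real.exp (-(((m:ℝ)+1)*t)) = (ε N)^(m+1) := by
        rw [hεt, ← Real.exp_nat_mul]
        congr 1
        push_cast; ring
      rw [this]
    rw [heqexp] at hHeq
    exact ⟨by linarith [hHeq.symm ▸ le_refl ((N:ℝ)^2)], H, hH0, hH3, hHeq.symm⟩
  obtain ⟨hge, H, hH0, hH3, hHeq⟩ := heqN
  -- t ≤ 1
  have hπ4 : π ≤ 4 := Real.pi_le_four
  have hπ0 : 0 < π := Real.pi_pos
  have ht1 : t ≤ 1 := by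
    by_contra hcon
    push_neg at hcon
    have h1 : Real.pi^2/6 / t^2 ≥ (N:ℝ)^2 := by linarith
    have h2 : (N:ℝ)^2 ≥ 9 := by nlinarith
    have h3 : t^2 > 1 := by nlinarith
    have h4 : Real.pi^2/6 / t^2 < Real.pi^2/6 := by
      rw [div_lt_iff₀ (by positivity)]
      nlinarith [mul_pos (by positivity : (0:ℝ) < π^2/6) (by linarith : (0:ℝ) < t^2 - 1)]
    have h5 : π^2 ≤ 16 := by nlinarith
    linarith
  have hHt := hH3 ht1
  -- α²/t² = N² + H
  have hkey : α^2 = (N:ℝ)^2 * t^2 + H * t^2 := by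
    have hX : Real.pi^2/6 / t^2 * t^2 = Real.pi^2/6 := by field_simp
    linear_combination hα2 - hX + t^2 * hHeq
  have hHt2 : H * t^2 ≤ 3 * t := by
    have h1 : H * t ≤ 3 := by
      rw [div_eq_mul_inv] at hHt
      calc H * t ≤ (3 * t⁻¹) * t := by nlinarith
        _ = 3 := by field_simp
    nlinarith
  -- upper bound t ≤ α/N
  -- bounds on t via u = N*t
  have hu0 : 0 ≤ (N:ℝ)*t := by positivity
  have hu2 : ((N:ℝ)*t)^2 ≤ α^2 := by
    nlinarith [mul_nonneg hH0 (sq_nonneg t)]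
  have huα : (N:ℝ)*t ≤ α := by
    nlinarith [hu2, hu0, sq_nonneg ((N:ℝ)*t + α)]
  have htup : t ≤ α/N := by
    rw [le_div_iff₀ hNpos]; linarith
  have hαu : α - (N:ℝ)*t ≤ 3*t := by
    have e1 : H*t^2 = α^2 - ((N:ℝ)*t)^2 := by linear_combination -hkey
    have e2 : (α - (N:ℝ)*t)*α ≤ 3*t := by
      calc (α - (N:ℝ)*t)*α ≤ (α - (N:ℝ)*t)*(α + (N:ℝ)*t) := by nlinarith [hu0, huα]
        _ = α^2 - ((N:ℝ)*t)^2 := by ring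
        _ = H*t^2 := e1.symm
        _ ≤ 3*t := hHt2
    nlinarith [e2, hα1, huα]
  have ht2n : t ≤ 2/(N:ℝ) := le_trans htup (by gcongr)
  have h3 : α/N - t ≤ 6/(N:ℝ)^2 := by
    have e : α/(N:ℝ) - t = (α - (N:ℝ)*t)/(N:ℝ) := by field_simp
    rw [e]
    calc (α - (N:ℝ)*t)/(N:ℝ) ≤ (3*t)/(N:ℝ) := by gcongr
      _ ≤ (3*(2/(N:ℝ)))/(N:ℝ) := by gcongr
      _ = 6/(N:ℝ)^2 := by field_simp; ring
  -- final estimates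
  have hexp1 : 0 ≤ Real.exp (-t) - 1 + t := by
    have := Real.add_one_le_exp (-t)
    linarith
  have hexp2 : Real.exp (-t) - 1 + t ≤ t^2 := by
    have h1 : (1 + t) ≤ Real.exp t := by linarith [Real.add_one_le_exp t]
    have h2 : Real.exp (-t) * Real.exp t = 1 := by
      rw [← Real.exp_add]; norm_num
    have h3 : Real.exp (-t) * (1 + t) ≤ 1 := by
      nlinarith [Real.exp_pos (-t)]
    nlinarith [Real.exp_pos (-t)]
  have hbound : |ε N - (1 - α/N)| ≤ 10/N^2 := by
    have hts : t^2 ≤ 4/(N:ℝ)^2 := by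
      calc t^2 ≤ (2/(N:ℝ))^2 := by nlinarith [htpos.le, ht2n]
        _ = 4/(N:ℝ)^2 := by rw [div_pow]; norm_num
    have h1 : ε N - (1 - α/N) = (Real.exp (-t) - 1 + t) + (α/N - t) := by
      rw [hεt]; ring
    have h2 : 0 ≤ α/N - t := by linarith
    rw [h1, abs_of_nonneg (by linarith)]
    have : Real.exp (-t) - 1 + t ≤ 4/(N:ℝ)^2 := le_trans hexp2 hts
    calc (Real.exp (-t) - 1 + t) + (α/N - t) ≤ 4/(N:ℝ)^2 + 6/(N:ℝ)^2 := add_le_add this h3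
      _ = 10/(N:ℝ)^2 := by ring
  -- conclude
  have hlogN : 1 ≤ Real.log N := by
    rw [Real.le_log_iff_exp_le hNpos]
    calc Real.exp 1 ≤ 2.7182818286 := Real.exp_one_lt_d9.le
      _ ≤ 3 := by norm_num
      _ ≤ N := hN3
  rw [Real.norm_eq_abs, Real.norm_eq_abs]
  have habs : |Real.log N / (N:ℝ)^2| = Real.log N / (N:ℝ)^2 :=
    abs_of_nonneg (div_nonneg (by linarith) (by positivity))
  rw [habs]
  calc |ε N - (1 - α/N)| ≤ 10/N^2 := hbound
    _ ≤ 10 * (Real.log N / N^2) := by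
        rw [div_le_iff₀ (by positivity)]
        have e : 10 * (Real.log N / N^2) * N^2 = 10 * Real.log N := by field_simp
        rw [e]
        nlinarith
end

section
/- Let ε(N) ∈ (0,1) be defined for large N by ∑_{m=1}^∞ (-1)^{m-1} ε(N)^m/(1-ε(N)^m)^2 = N^2. Then ε(N) = 1 - β/N + O(log N / N^2) as N → ∞, where β = π/√12. -/
open Filter Finset Real

noncomputable def epsAuxG (q : ℝ) (m : ℕ) : ℝ := q ^ (m + 1) / (1 - q ^ (m + 1)) ^ 2

lemma epsAux_pow_lt {q : ℝ} (hq0 : 0 ≤ q) (hq1 : q < 1) (m : ℕ) : q ^ (m + 1) < 1 :=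
  pow_lt_one₀ hq0 hq1 (Nat.succ_ne_zero m)

lemma epsAuxG_nonneg {q : ℝ} (hq0 : 0 ≤ q) (m : ℕ) : 0 ≤ epsAuxG q m :=
  div_nonneg (pow_nonneg hq0 _) (sq_nonneg _)

lemma epsAuxG_pos_denom {q : ℝ} (hq0 : 0 ≤ q) (hq1 : q < 1) (m : ℕ) :
    0 < 1 - q ^ (m + 1) := by linarith [epsAux_pow_lt hq0 hq1 m]

lemma epsAux_summable {q : ℝ} (hq0 : 0 ≤ q) (hq1 : q < 1) : Summable (epsAuxG q) := by
  apply Summable.of_nonneg_of_le (epsAuxG_nonneg hq0)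
    (f := fun m => (q / (1 - q) ^ 2) * q ^ m)
  · intro m
    have h1 : 0 < 1 - q := by linarith
    have h2 : 1 - q ≤ 1 - q ^ (m + 1) := by
      have : q ^ (m + 1) ≤ q := pow_le_of_le_one hq0 hq1.le (Nat.succ_ne_zero m)
      linarith
    have h3 : 0 < 1 - q ^ (m + 1) := lt_of_lt_of_le h1 h2
    have : q ^ (m + 1) / (1 - q ^ (m + 1)) ^ 2 ≤ q ^ (m + 1) / (1 - q) ^ 2 := by
      gcongr
    calc epsAuxG q m ≤ q ^ (m + 1) / (1 - q) ^ 2 := this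
      _ = (q / (1 - q) ^ 2) * q ^ m := by rw [pow_succ]; ring
  · exact (summable_geometric_of_lt_one hq0 hq1).mul_left _

/-- Cauchy–Schwarz consequence: `(m+1)^2 * q^m ≤ (∑_{j<m+1} q^j)^2`. -/
lemma epsAux_cs {q : ℝ} (hq0 : 0 ≤ q) (m : ℕ) :
    ((m : ℝ) + 1) ^ 2 * q ^ m ≤ (∑ j ∈ range (m + 1), q ^ j) ^ 2 := by
  have key := Finset.sum_mul_sq_le_sq_mul_sq (range (m + 1))
    (fun j => Real.sqrt (q ^ j)) (fun j => Real.sqrt (q ^ (m - j)))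
  have h1 : ∀ j ∈ range (m + 1), Real.sqrt (q ^ j) * Real.sqrt (q ^ (m - j)) =
      Real.sqrt (q ^ m) := by
    intro j hj
    have hjm : j ≤ m := Nat.lt_succ_iff.mp (mem_range.mp hj)
    rw [← Real.sqrt_mul (pow_nonneg hq0 _), ← pow_add]
    congr 2
    omega
  have h2 : ∀ j, Real.sqrt (q ^ j) ^ 2 = q ^ j := fun j => Real.sq_sqrt (pow_nonneg hq0 _)
  rw [Finset.sum_congr rfl h1] at key
  simp only [h2, Finset.sum_const, card_range, nsmul_eq_mul] at key
  have h3 : ∑ j ∈ range (m + 1), q ^ (m - j) = ∑ j ∈ range (m + 1), q ^ j := by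
    have := Finset.sum_range_reflect (fun j => q ^ j) (m + 1)
    simpa using this
  have h4 : (((m + 1 : ℕ) : ℝ) * Real.sqrt (q ^ m)) ^ 2 = ((m : ℝ) + 1) ^ 2 * q ^ m := by
    rw [mul_pow, h2]; push_cast; ring
  rw [h3, ← sq] at key
  linarith [h4]

lemma epsAux_geom {q : ℝ} (m : ℕ) :
    (1 - q) * ∑ j ∈ range (m + 1), q ^ j = 1 - q ^ (m + 1) := by
  linear_combination -geom_sum_mul q (m + 1)

lemma epsAux_S_le {q : ℝ} (hq0 : 0 ≤ q) (hq1 : q < 1) (m : ℕ) :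
    ∑ j ∈ range (m + 1), q ^ j ≤ (m : ℝ) + 1 := by
  have := Finset.sum_le_card_nsmul (range (m + 1)) (fun j => q ^ j) 1
    (fun j _ => pow_le_one₀ hq0 hq1.le)
  simpa using this

lemma epsAux_one_sub_le {q : ℝ} (hq0 : 0 ≤ q) (hq1 : q < 1) (m : ℕ) :
    1 - q ^ (m + 1) ≤ ((m : ℝ) + 1) * (1 - q) := by
  rw [← epsAux_geom]
  have h1 : 0 ≤ 1 - q := by linarith
  nlinarith [epsAux_S_le hq0 hq1 m]

lemma epsAux_term {q : ℝ} (hq0 : 0 < q) (hq1 : q < 1) (m : ℕ) :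
    q ^ (m + 1) / (((m : ℝ) + 1) ^ 2 * (1 - q) ^ 2) ≤ epsAuxG q m ∧
    epsAuxG q m ≤ 1 / (((m : ℝ) + 1) ^ 2 * (1 - q) ^ 2) := by
  have hu : 0 < 1 - q := by linarith
  have hd : 0 < 1 - q ^ (m + 1) := by linarith [epsAux_pow_lt hq0.le hq1 m]
  have hden : (0 : ℝ) < ((m : ℝ) + 1) ^ 2 * (1 - q) ^ 2 := by positivity
  have hge : (1 - q ^ (m + 1)) ^ 2 ≤ ((m : ℝ) + 1) ^ 2 * (1 - q) ^ 2 := by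
    have h1 := epsAux_one_sub_le hq0.le hq1 m
    nlinarith [hd.le, mul_nonneg (by positivity : (0:ℝ) ≤ (m:ℝ)+1) hu.le]
  constructor
  · rw [epsAuxG]
    gcongr
  · rw [epsAuxG, div_le_div_iff₀ (by positivity) hden]
    set S := ∑ j ∈ range (m + 1), q ^ j with hS
    have hgeom := epsAux_geom (q := q) m
    have hcs := epsAux_cs hq0.le m
    have h5 : ((m : ℝ) + 1) ^ 2 * q ^ (m + 1) ≤ S ^ 2 := by
      have : ((m : ℝ) + 1) ^ 2 * q ^ (m + 1) = (((m : ℝ) + 1) ^ 2 * q ^ m) * q := by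
        rw [pow_succ]; ring
      rw [this]
      calc (((m : ℝ) + 1) ^ 2 * q ^ m) * q ≤ S ^ 2 * 1 :=
            mul_le_mul hcs hq1.le hq0.le (by positivity)
        _ = S ^ 2 := mul_one _
    have hsq : (1 - q ^ (m + 1)) ^ 2 = (1 - q) ^ 2 * S ^ 2 := by
      rw [← hgeom]; ring
    rw [one_mul, hsq]
    nlinarith [h5, sq_nonneg (1 - q)]

lemma epsAux_tail (M : ℕ) (hM : 1 ≤ M) :
    ∑' n : ℕ, (1 : ℝ) / ((n : ℝ) + M + 1) ^ 2 ≤ 1 / (M : ℝ) := by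
  set h : ℕ → ℝ := fun n => 1 / ((n : ℝ) + M) - 1 / ((n : ℝ) + M + 1) with hh
  have hMpos : (0 : ℝ) < M := by exact_mod_cast hM
  have hpos : ∀ n : ℕ, (0 : ℝ) < (n : ℝ) + M := fun n => by positivity
  have hnn : ∀ n, 0 ≤ h n := by
    intro n
    have h1 : (0:ℝ) < (n : ℝ) + M := hpos n
    have h2 : (0:ℝ) < (n : ℝ) + M + 1 := by linarith
    have : 1 / ((n : ℝ) + M + 1) ≤ 1 / ((n : ℝ) + M) :=
      one_div_le_one_div_of_le h1 (by linarith)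
    simp only [hh]; linarith
  have hps : ∀ k, ∑ n ∈ range k, h n = 1 / (M : ℝ) - 1 / ((k : ℝ) + M) := by
    intro k
    have := Finset.sum_range_sub' (fun n => 1 / ((n : ℝ) + M)) k
    simp only [Nat.cast_zero, zero_add] at this
    rw [hh]
    convert this using 2 with n
    push_cast; ring
  have hsum : Summable h := by
    apply summable_of_sum_range_le hnn (c := 1 / (M : ℝ))
    intro k
    rw [hps]
    have : (0:ℝ) < (k : ℝ) + M := by positivity
    have : 0 ≤ 1 / ((k : ℝ) + M) := by positivity
    linarith
  have hhs : HasSum h (1 / (M : ℝ)) := by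
    rw [hsum.hasSum_iff_tendsto_nat]
    have h1 : Tendsto (fun k : ℕ => 1 / ((k : ℝ) + M)) atTop (nhds 0) := by
      have ha : Tendsto (fun k : ℕ => (k : ℝ) + M) atTop atTop :=
        tendsto_atTop_add_const_right atTop (M : ℝ) tendsto_natCast_atTop_atTop
      simpa [one_div, Pi.inv_def] using ha.inv_tendsto_atTop
    have := (tendsto_const_nhds (x := 1 / (M:ℝ))).sub h1
    simp only [sub_zero] at this
    exact Tendsto.congr (fun k => (hps k).symm) this
  have hle : ∀ n : ℕ, (1 : ℝ) / ((n : ℝ) + M + 1) ^ 2 ≤ h n := by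
    intro n
    have h1 : (0:ℝ) < (n : ℝ) + M := hpos n
    have h2 : (0:ℝ) < (n : ℝ) + M + 1 := by linarith
    have he : h n = 1 / (((n : ℝ) + M) * ((n : ℝ) + M + 1)) := by
      rw [hh]; field_simp; ring
    rw [he]
    exact one_div_le_one_div_of_le (by positivity) (by nlinarith)
  have hsum2 : Summable fun n : ℕ => (1 : ℝ) / ((n : ℝ) + M + 1) ^ 2 :=
    Summable.of_nonneg_of_le (fun n => by positivity) hle hsum
  calc ∑' n : ℕ, (1 : ℝ) / ((n : ℝ) + M + 1) ^ 2 ≤ ∑' n, h n :=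
        Summable.tsum_le_tsum hle hsum2 hsum
    _ = 1 / (M : ℝ) := hhs.tsum_eq

lemma epsAux_harm (M : ℕ) :
    ∑ m ∈ range M, (1 : ℝ) / ((m : ℝ) + 1) ≤ 1 + Real.log M := by
  have key : ∀ k : ℕ, ∑ m ∈ range k, (1 : ℝ) / ((m : ℝ) + 1) = (harmonic k : ℝ) := by
    intro k
    induction k with
    | zero => simp
    | succ n ih =>
      rw [Finset.sum_range_succ, ih, harmonic_succ]
      push_cast
      ring
  rw [key]
  exact harmonic_le_one_add_log M

lemma epsAux_zeta' : Summable fun m : ℕ => (1 : ℝ) / ((m : ℝ) + 1) ^ 2 := by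
  have := (summable_nat_add_iff (f := fun n : ℕ => (1 : ℝ) / (n : ℝ) ^ 2) 1).mpr
    hasSum_zeta_two.summable
  apply this.congr
  intro n
  push_cast
  ring

lemma epsAux_sumbound {u : ℝ} (hu0 : 0 < u) (hu1 : u ≤ 1) {d : ℕ → ℝ}
    (h0 : ∀ m, 0 ≤ d m) (h1 : ∀ m, d m ≤ 1 / ((m : ℝ) + 1) ^ 2)
    (h2 : ∀ m, d m ≤ u / ((m : ℝ) + 1)) :
    ∑' m, d m ≤ u * (3 + Real.log (1 / u)) := by
  have hinv : (1 : ℝ) ≤ 1 / u := by rw [le_div_iff₀ hu0]; linarith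
  set M : ℕ := ⌈1 / u⌉₊ with hMdef
  have hM1 : 1 ≤ M := Nat.one_le_ceil_iff.mpr (by positivity)
  have hMpos : (0 : ℝ) < M := by exact_mod_cast hM1
  have hMg : 1 / u ≤ (M : ℝ) := Nat.le_ceil _
  have hMl : (M : ℝ) ≤ 2 / u := by
    have := Nat.ceil_lt_add_one (by positivity : (0:ℝ) ≤ 1 / u)
    have h2u : 1 / u + 1 ≤ 2 / u := by
      have he : 2 / u = 1 / u + 1 / u := by ring
      linarith
    linarith
  have hsd : Summable d := Summable.of_nonneg_of_le h0 h1 epsAux_zeta'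
  rw [← Summable.sum_add_tsum_nat_add M hsd]
  have bound1 : ∑ m ∈ range M, d m ≤ u * (2 + Real.log (1 / u)) := by
    have hle : ∑ m ∈ range M, d m ≤ ∑ m ∈ range M, u * (1 / ((m : ℝ) + 1)) := by
      apply Finset.sum_le_sum
      intro m _
      rw [mul_one_div]
      exact h2 m
    rw [← Finset.mul_sum] at hle
    have hlog : Real.log M ≤ Real.log 2 + Real.log (1 / u) := by
      rw [← Real.log_mul (by norm_num) (by positivity)]
      apply Real.log_le_log hMpos
      rw [mul_one_div]
      exact hMl
    have hlog2 : Real.log 2 ≤ 1 := by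
      linarith [Real.log_le_sub_one_of_pos (by norm_num : (0:ℝ) < 2)]
    have := epsAux_harm M
    calc ∑ m ∈ range M, d m ≤ u * ∑ m ∈ range M, 1 / ((m : ℝ) + 1) := hle
      _ ≤ u * (2 + Real.log (1 / u)) := by
          apply mul_le_mul_of_nonneg_left _ hu0.le
          linarith
  have bound2 : ∑' n : ℕ, d (n + M) ≤ u := by
    have hle : ∀ n : ℕ, d (n + M) ≤ (1 : ℝ) / ((n : ℝ) + M + 1) ^ 2 := by
      intro n
      have := h1 (n + M)
      have hc : ((n + M : ℕ) : ℝ) + 1 = (n : ℝ) + M + 1 := by push_cast; ring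
      rwa [hc] at this
    have hs1 : Summable fun n : ℕ => d (n + M) := (summable_nat_add_iff M).mpr hsd
    have hs2 : Summable fun n : ℕ => (1 : ℝ) / ((n : ℝ) + M + 1) ^ 2 := by
      have := (summable_nat_add_iff (f := fun m : ℕ => (1 : ℝ) / ((m : ℝ) + 1) ^ 2) M).mpr
        epsAux_zeta'
      apply this.congr
      intro n
      push_cast
      ring
    have h1M : (1 : ℝ) / M ≤ u := by
      rw [div_le_iff₀ hMpos]
      calc (1 : ℝ) = u * (1 / u) := by field_simp
        _ ≤ u * M := by apply mul_le_mul_of_nonneg_left hMg hu0.le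
    calc ∑' n : ℕ, d (n + M) ≤ ∑' n : ℕ, (1 : ℝ) / ((n : ℝ) + M + 1) ^ 2 :=
          Summable.tsum_le_tsum hle hs1 hs2
      _ ≤ 1 / M := epsAux_tail M hM1
      _ ≤ u := h1M
  linarith

lemma epsAux_hz : HasSum (fun n : ℕ => 1 / ((n : ℝ) + 1) ^ 2) (π ^ 2 / 6) := by
  have h0 : HasSum (fun n : ℕ => (1 : ℝ) / (n : ℝ) ^ 2)
      (π ^ 2 / 6 + ∑ i ∈ range 1, (1 : ℝ) / (i : ℝ) ^ 2) := by
    simpa using hasSum_zeta_two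
  have h1 := (hasSum_nat_add_iff (f := fun n : ℕ => (1 : ℝ) / (n : ℝ) ^ 2) 1).2 h0
  have heq : (fun n : ℕ => (1 : ℝ) / ((n + 1 : ℕ) : ℝ) ^ 2) =
      fun n : ℕ => 1 / ((n : ℝ) + 1) ^ 2 := by
    funext n; push_cast; ring
  exact heq ▸ h1

lemma epsAux_F_bounds {q : ℝ} (hq0 : 0 < q) (hq1 : q < 1) :
    (∑' m, epsAuxG q m) ≤ π ^ 2 / (6 * (1 - q) ^ 2) ∧
    π ^ 2 / (6 * (1 - q) ^ 2) - (∑' m, epsAuxG q m) ≤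
      (3 + Real.log (1 / (1 - q))) / (1 - q) := by
  set u := 1 - q with hudef
  have hu : 0 < u := by simp [hudef]; linarith
  have hu1 : u ≤ 1 := by simp [hudef]; linarith
  set c : ℕ → ℝ := fun m => 1 / ((m : ℝ) + 1) ^ 2 / u ^ 2 with hcdef
  have hceq : ∀ m : ℕ, c m = 1 / (((m : ℝ) + 1) ^ 2 * u ^ 2) := by
    intro m; simp only [hcdef]; rw [div_div]
  have hc : HasSum c (π ^ 2 / 6 / u ^ 2) := epsAux_hz.div_const _
  have hgs : Summable (epsAuxG q) := epsAux_summable hq0.le hq1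
  set d : ℕ → ℝ := fun m => c m - epsAuxG q m with hddef
  have h0 : ∀ m, 0 ≤ d m := by
    intro m
    have := (epsAux_term hq0 hq1 m).2
    rw [hddef]
    simp only
    rw [hceq m]
    linarith
  have hup : ∀ m, d m ≤ (1 - q ^ (m + 1)) / (((m : ℝ) + 1) ^ 2 * u ^ 2) := by
    intro m
    have h1 := (epsAux_term hq0 hq1 m).1
    rw [hddef]
    simp only
    rw [hceq m]
    have : (1 - q ^ (m + 1)) / (((m : ℝ) + 1) ^ 2 * u ^ 2) =
        1 / (((m : ℝ) + 1) ^ 2 * u ^ 2) - q ^ (m + 1) / (((m : ℝ) + 1) ^ 2 * u ^ 2) := by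
      ring
    rw [this]
    linarith
  have hD1 : ∀ m, u ^ 2 * d m ≤ 1 / ((m : ℝ) + 1) ^ 2 := by
    intro m
    have h1 := hup m
    have h2 : 1 - q ^ (m + 1) ≤ 1 := by
      have := pow_nonneg hq0.le (m + 1); linarith
    have hm : (0:ℝ) < ((m : ℝ) + 1) ^ 2 := by positivity
    have heq2 : u ^ 2 * ((1 - q ^ (m + 1)) / (((m : ℝ) + 1) ^ 2 * u ^ 2)) =
        (1 - q ^ (m + 1)) / ((m : ℝ) + 1) ^ 2 := by
      field_simp
    have h3 : (1 - q ^ (m + 1)) / ((m : ℝ) + 1) ^ 2 ≤ 1 / ((m : ℝ) + 1) ^ 2 := by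
      gcongr
    calc u ^ 2 * d m ≤ u ^ 2 * ((1 - q ^ (m + 1)) / (((m : ℝ) + 1) ^ 2 * u ^ 2)) :=
          mul_le_mul_of_nonneg_left h1 (sq_nonneg u)
      _ = (1 - q ^ (m + 1)) / ((m : ℝ) + 1) ^ 2 := heq2
      _ ≤ 1 / ((m : ℝ) + 1) ^ 2 := h3
  have hD2 : ∀ m, u ^ 2 * d m ≤ u / ((m : ℝ) + 1) := by
    intro m
    have h1 := hup m
    have heq2 : u ^ 2 * ((1 - q ^ (m + 1)) / (((m : ℝ) + 1) ^ 2 * u ^ 2)) =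
        (1 - q ^ (m + 1)) / ((m : ℝ) + 1) ^ 2 := by
      field_simp
    have h4 : (1 - q ^ (m + 1)) / ((m : ℝ) + 1) ^ 2 ≤
        (((m : ℝ) + 1) * u) / ((m : ℝ) + 1) ^ 2 := by
      gcongr
      exact epsAux_one_sub_le hq0.le hq1 m
    have h5 : (((m : ℝ) + 1) * u) / ((m : ℝ) + 1) ^ 2 = u / ((m : ℝ) + 1) := by
      field_simp
    calc u ^ 2 * d m ≤ u ^ 2 * ((1 - q ^ (m + 1)) / (((m : ℝ) + 1) ^ 2 * u ^ 2)) :=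
          mul_le_mul_of_nonneg_left h1 (sq_nonneg u)
      _ = (1 - q ^ (m + 1)) / ((m : ℝ) + 1) ^ 2 := heq2
      _ ≤ u / ((m : ℝ) + 1) := by rw [← h5]; exact h4
  have h0' : ∀ m, 0 ≤ u ^ 2 * d m := fun m => mul_nonneg (sq_nonneg u) (h0 m)
  have hDsum := epsAux_sumbound hu hu1 h0' hD1 hD2
  have htd : ∑' m, u ^ 2 * d m = u ^ 2 * ∑' m, d m := tsum_mul_left
  have htsub : ∑' m, d m = π ^ 2 / 6 / u ^ 2 - ∑' m, epsAuxG q m := by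
    simp only [hddef]
    rw [Summable.tsum_sub hc.summable hgs, hc.tsum_eq]
  have hdivdiv : π ^ 2 / 6 / u ^ 2 = π ^ 2 / (6 * u ^ 2) := by rw [div_div]
  constructor
  · have hle : ∀ m, epsAuxG q m ≤ c m := by
      intro m
      have := h0 m
      rw [hddef] at this
      simp only at this
      linarith
    have := Summable.tsum_le_tsum hle hgs hc.summable
    rw [hc.tsum_eq] at this
    rw [← hdivdiv]
    exact this
  · rw [htd, htsub] at hDsum
    rw [← hdivdiv]
    rw [le_div_iff₀ hu]
    nlinarith [hDsum, hu]

lemma epsAux_gq_sq (q : ℝ) (m : ℕ) : epsAuxG (q ^ 2) m = epsAuxG q (2 * m + 1) := by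
  have h : (q ^ 2) ^ (m + 1) = q ^ (2 * m + 1 + 1) := by
    rw [← pow_mul, show 2 * (m + 1) = 2 * m + 1 + 1 by omega]
  rw [epsAuxG, epsAuxG, h]

lemma epsAux_anti {q : ℝ} (hq0 : 0 < q) (hq1 : q < 1) (m : ℕ) :
    epsAuxG q (m + 1) ≤ epsAuxG q m := by
  have hx0 : 0 < q ^ (m + 1) := pow_pos hq0 _
  have hx1 : q ^ (m + 1) < 1 := epsAux_pow_lt hq0.le hq1 m
  have hy1 : q ^ (m + 1 + 1) < 1 := epsAux_pow_lt hq0.le hq1 (m + 1)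
  have hy : q ^ (m + 1 + 1) = q ^ (m + 1) * q := pow_succ q (m + 1)
  set x := q ^ (m + 1) with hxdef
  rw [epsAuxG, epsAuxG, hy]
  have hd1 : 0 < (1 - x * q) ^ 2 := by nlinarith
  have hd2 : 0 < (1 - x) ^ 2 := by nlinarith
  rw [div_le_div_iff₀ hd1 hd2]
  nlinarith [mul_nonneg (mul_nonneg hx0.le (by linarith : (0:ℝ) ≤ 1 - q))
    (by nlinarith : (0:ℝ) ≤ 1 - q * x ^ 2)]

lemma epsAux_A_repr {q : ℝ} (hq0 : 0 < q) (hq1 : q < 1) :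
    (∑' m : ℕ, (-1 : ℝ) ^ m * q ^ (m + 1) / (1 - q ^ (m + 1)) ^ 2) =
      (∑' m, epsAuxG q m) - 2 * ∑' m, epsAuxG (q ^ 2) m ∧
    epsAuxG q 0 - epsAuxG q 1 ≤
      ∑' m : ℕ, (-1 : ℝ) ^ m * q ^ (m + 1) / (1 - q ^ (m + 1)) ^ 2 := by
  set f : ℕ → ℝ := fun m => (-1 : ℝ) ^ m * q ^ (m + 1) / (1 - q ^ (m + 1)) ^ 2 with hfdef
  have hFs : Summable (epsAuxG q) := epsAux_summable hq0.le hq1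
  have habs : ∀ m, |f m| = epsAuxG q m := by
    intro m
    simp only [hfdef]
    rw [abs_div, abs_mul, abs_pow, abs_neg, abs_one, one_pow, one_mul,
      abs_of_nonneg (pow_nonneg hq0.le _), abs_of_nonneg (sq_nonneg _)]
    rfl
  have hsf : Summable f := by
    apply Summable.of_abs
    rw [funext habs]
    exact hFs
  have heven : ∀ k, f (2 * k) = epsAuxG q (2 * k) := by
    intro k
    simp only [hfdef, epsAuxG]
    rw [pow_mul]
    norm_num
  have hodd : ∀ k, f (2 * k + 1) = -epsAuxG q (2 * k + 1) := by
    intro k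
    simp only [hfdef, epsAuxG]
    rw [pow_succ, pow_mul]
    norm_num
    ring
  have hinj2 : Function.Injective (fun k : ℕ => 2 * k) := fun a b h => by
    simp only at h; omega
  have hinj2' : Function.Injective (fun k : ℕ => 2 * k + 1) := fun a b h => by
    simp only at h; omega
  have hse : Summable (fun k => f (2 * k)) := hsf.comp_injective hinj2
  have hso : Summable (fun k => f (2 * k + 1)) := hsf.comp_injective hinj2'
  have hge : Summable (fun k => epsAuxG q (2 * k)) := hFs.comp_injective hinj2
  have hgo : Summable (fun k => epsAuxG q (2 * k + 1)) := hFs.comp_injective hinj2'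
  have hEO := tsum_even_add_odd hse hso
  have hGEO := tsum_even_add_odd hge hgo
  have he1 : ∑' k, f (2 * k) = ∑' k, epsAuxG q (2 * k) := tsum_congr heven
  have he2 : ∑' k, f (2 * k + 1) = -∑' k, epsAuxG q (2 * k + 1) := by
    rw [tsum_congr hodd, tsum_neg]
  have he3 : ∑' k, epsAuxG q (2 * k + 1) = ∑' m, epsAuxG (q ^ 2) m :=
    tsum_congr fun k => (epsAux_gq_sq q k).symm
  constructor
  · linarith [hEO, hGEO, he1, he2, he3]
  · have hz1 := Summable.tsum_eq_zero_add hge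
    have hz2 := Summable.tsum_eq_zero_add hgo
    have hs22 : Summable (fun k : ℕ => epsAuxG q (2 * k + 2)) :=
      hFs.comp_injective (fun a b h => by simp only at h; omega :
        Function.Injective fun k : ℕ => 2 * k + 2)
    have hs23 : Summable (fun k : ℕ => epsAuxG q (2 * k + 3)) :=
      hFs.comp_injective (fun a b h => by simp only at h; omega :
        Function.Injective fun k : ℕ => 2 * k + 3)
    have hT : ∑' k : ℕ, epsAuxG q (2 * k + 3) ≤ ∑' k : ℕ, epsAuxG q (2 * k + 2) := by
      apply Summable.tsum_le_tsum _ hs23 hs22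
      intro k
      have := epsAux_anti hq0 hq1 (2 * k + 2)
      convert this using 2
    have e2 : ∑' k : ℕ, epsAuxG q (2 * (k + 1)) = ∑' k : ℕ, epsAuxG q (2 * k + 2) :=
      tsum_congr fun k => by rw [show 2 * (k + 1) = 2 * k + 2 by omega]
    have e3 : ∑' k : ℕ, epsAuxG q (2 * (k + 1) + 1) = ∑' k : ℕ, epsAuxG q (2 * k + 3) :=
      tsum_congr fun k => by rw [show 2 * (k + 1) + 1 = 2 * k + 3 by omega]
    have hz1' : ∑' k, epsAuxG q (2 * k) =
        epsAuxG q 0 + ∑' k : ℕ, epsAuxG q (2 * k + 2) := by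
      rw [hz1, ← e2]
    have hz2' : ∑' k, epsAuxG q (2 * k + 1) =
        epsAuxG q 1 + ∑' k : ℕ, epsAuxG q (2 * k + 3) := by
      rw [hz2, ← e3]
    have : ∑' m, f m = ∑' k, epsAuxG q (2 * k) - ∑' k, epsAuxG q (2 * k + 1) := by
      linarith [hEO, he1, he2]
    rw [this, hz1', hz2']
    linarith

set_option maxHeartbeats 1000000 in
lemma epsAux_main_est {q : ℝ} (hq : 1 / 2 ≤ q) (hq1 : q < 1) :
    |(∑' m : ℕ, (-1 : ℝ) ^ m * q ^ (m + 1) / (1 - q ^ (m + 1)) ^ 2) -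
      π ^ 2 / (12 * (1 - q) ^ 2)| ≤ (12 + 3 * Real.log (1 / (1 - q))) / (1 - q) := by
  have hq0 : 0 < q := by linarith
  have hu : 0 < 1 - q := by linarith
  have hq20 : 0 < q ^ 2 := by positivity
  have hq21 : q ^ 2 < 1 := by nlinarith
  have hu2 : 0 < 1 - q ^ 2 := by linarith
  have huu2 : 1 - q ≤ 1 - q ^ 2 := by nlinarith
  set u : ℝ := 1 - q with hudef
  set u₂ : ℝ := 1 - q ^ 2 with hu2def
  set L : ℝ := Real.log (1 / u) with hLdef
  have hL0 : 0 ≤ L := Real.log_nonneg (by rw [le_div_iff₀ hu]; linarith)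
  have hF := epsAux_F_bounds hq0 hq1
  have hF2 := epsAux_F_bounds hq20 hq21
  set F : ℝ := ∑' m, epsAuxG q m with hFdef
  set F2 : ℝ := ∑' m, epsAuxG (q ^ 2) m with hF2def
  have hA := (epsAux_A_repr hq0 hq1).1
  -- transfer the bound for F2
  have hlog2 : Real.log (1 / u₂) ≤ L := by
    rw [hLdef]
    apply Real.log_le_log (by positivity)
    gcongr
  have htrans : (3 + Real.log (1 / u₂)) / u₂ ≤ (3 + L) / u :=
    div_le_div₀ (by linarith) (by linarith) hu huu2
  have hF2a : F2 ≤ π ^ 2 / (6 * u₂ ^ 2) := hF2.1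
  have hF2b : π ^ 2 / (6 * u₂ ^ 2) - F2 ≤ (3 + L) / u := le_trans hF2.2 htrans
  -- the bracket term
  have hBeq : π ^ 2 / (6 * u ^ 2) - 2 * (π ^ 2 / (6 * u₂ ^ 2)) - π ^ 2 / (12 * u ^ 2) =
      -(π ^ 2 * (q + 3) / (12 * u * (1 + q) ^ 2)) := by
    rw [hudef, hu2def]
    have h1q : (0:ℝ) < 1 + q := by linarith
    have hne1 : (1:ℝ) - q ≠ 0 := by linarith
    have hne2 : (1:ℝ) - q ^ 2 ≠ 0 := by linarith
    field_simp
    ring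
  have hBle : π ^ 2 * (q + 3) / (12 * u * (1 + q) ^ 2) ≤ 2 / u := by
    have hpi2 : π ^ 2 ≤ 10 := by nlinarith [Real.pi_lt_d2, Real.pi_pos]
    have hkey : π ^ 2 * (q + 3) ≤ 24 * (1 + q) ^ 2 := by nlinarith [hpi2]
    rw [div_le_div_iff₀ (by positivity) hu]
    nlinarith [mul_le_mul_of_nonneg_right hkey hu.le]
  have hBpos : 0 ≤ π ^ 2 * (q + 3) / (12 * u * (1 + q) ^ 2) := by positivity
  -- assemble
  have h1 : π ^ 2 / (6 * u ^ 2) - F ≤ (3 + L) / u := hF.2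
  have h2 : 0 ≤ π ^ 2 / (6 * u ^ 2) - F := by linarith [hF.1]
  have h3 : 0 ≤ π ^ 2 / (6 * u₂ ^ 2) - F2 := by linarith [hF2.1]
  have hR0 : 0 ≤ (3 + L) / u := div_nonneg (by linarith) hu.le
  have hcomb : 3 * ((3 + L) / u) + 2 / u ≤ (12 + 3 * L) / u := by
    have e : 3 * ((3 + L) / u) + 2 / u = (3 * (3 + L) + 2) / u := by ring
    rw [e]
    exact (div_le_div_iff_of_pos_right hu).mpr (by linarith)
  rw [hA, abs_le]
  constructor
  · linarith [hBle, hBpos, hBeq, h1, h2, h3, hF2b]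
  · linarith [hBle, hBpos, hBeq, h1, h2, h3, hF2b]

set_option maxHeartbeats 1000000 in
theorem epsilonN_asymptotics_R (ε : ℕ → ℝ) (N₀ : ℕ)
    (hmem : ∀ N ≥ N₀, ε N ∈ Set.Ioo (0 : ℝ) 1)
    (heq : ∀ N ≥ N₀,
      ∑' m : ℕ, (-1 : ℝ) ^ m * (ε N) ^ (m + 1) / (1 - (ε N) ^ (m + 1)) ^ 2 = (N : ℝ) ^ 2) :
    (fun N : ℕ => ε N - (1 - (Real.pi / Real.sqrt 12) / N))
      =O[Filter.atTop] (fun N : ℕ => Real.log N / (N : ℝ) ^ 2) := by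
  obtain ⟨β, hβdef⟩ : ∃ β : ℝ, β = π / Real.sqrt 12 := ⟨_, rfl⟩
  rw [show (fun N : ℕ => ε N - (1 - (Real.pi / Real.sqrt 12) / N)) =
    (fun N : ℕ => ε N - (1 - β / N)) by rw [hβdef]]
  have hsq12 : Real.sqrt 12 ^ 2 = 12 := Real.sq_sqrt (by norm_num)
  have hβ2 : β ^ 2 = π ^ 2 / 12 := by
    rw [hβdef, div_pow, hsq12]
  have hβpos : 0 < β := by rw [hβdef]; positivity
  rw [Asymptotics.isBigO_iff]
  refine ⟨288, ?_⟩
  filter_upwards [eventually_ge_atTop (max N₀ 10)] with N hN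
  have hN0 : N₀ ≤ N := le_trans (le_max_left _ _) hN
  have hN10 : (10 : ℕ) ≤ N := le_trans (le_max_right _ _) hN
  have hNR : (10 : ℝ) ≤ (N : ℝ) := by exact_mod_cast hN10
  have hNpos : (0 : ℝ) < N := by linarith
  obtain ⟨hq0', hq1'⟩ := hmem N hN0
  obtain ⟨q, hqdef⟩ : ∃ x : ℝ, x = ε N := ⟨_, rfl⟩
  have hq0 : 0 < q := hqdef ▸ hq0'
  have hq1 : q < 1 := hqdef ▸ hq1'
  have hAeq : ∑' m : ℕ, (-1 : ℝ) ^ m * q ^ (m + 1) / (1 - q ^ (m + 1)) ^ 2 = (N : ℝ) ^ 2 := by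
    rw [hqdef]; exact heq N hN0
  obtain ⟨u, hudef⟩ : ∃ x : ℝ, x = 1 - q := ⟨_, rfl⟩
  have hu : 0 < u := by rw [hudef]; linarith
  have hpi2 : π ^ 2 ≤ 10 := by nlinarith only [Real.pi_lt_d2, Real.pi_pos]
  -- upper bound on u
  have hrepr := epsAux_A_repr hq0 hq1
  have hFb := epsAux_F_bounds hq0 hq1
  rw [← hudef] at hFb
  have hF2nn : 0 ≤ ∑' m, epsAuxG (q ^ 2) m :=
    tsum_nonneg fun m => epsAuxG_nonneg (by positivity) m
  have hAleF : (N : ℝ) ^ 2 ≤ π ^ 2 / (6 * u ^ 2) := by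
    rw [← hAeq, hrepr.1]
    linarith [hFb.1]
  have hu2N : (N : ℝ) ^ 2 * (6 * u ^ 2) ≤ π ^ 2 := by
    rw [← le_div_iff₀ (by positivity)]
    exact hAleF
  have huN : u ≤ 2 / N := by
    rw [le_div_iff₀ hNpos]
    nlinarith only [hu2N, hpi2, mul_nonneg hu.le hNpos.le]
  have hu15 : u ≤ 1 / 5 := by
    refine le_trans huN ?_
    rw [div_le_div_iff₀ hNpos (by norm_num)]
    linarith
  have hq12 : 1 / 2 ≤ q := by
    have := hu15
    rw [hudef] at this
    linarith
  -- lower bound on u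
  have hg01 : (3 / 8) / u ^ 2 ≤ epsAuxG q 0 - epsAuxG q 1 := by
    have e0 : epsAuxG q 0 = q / u ^ 2 := by rw [epsAuxG, hudef]; norm_num
    have e1 : epsAuxG q 1 = q ^ 2 / (u * (1 + q)) ^ 2 := by
      rw [epsAuxG, hudef]
      norm_num
      congr 1
      ring
    rw [e0, e1]
    have h1q : (0 : ℝ) < 1 + q := by linarith
    have hnum2 : 3 / 8 ≤ q - q ^ 2 / (1 + q) ^ 2 := by
      have hd : q ^ 2 / (1 + q) ^ 2 ≤ q - 3 / 8 := by
        rw [div_le_iff₀ (by positivity)]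
        nlinarith only [sq_nonneg (q - 1 / 2), hq12, hq1.le]
      linarith
    have e2 : q ^ 2 / (u * (1 + q)) ^ 2 = (q ^ 2 / (1 + q) ^ 2) / u ^ 2 := by
      rw [mul_pow, div_div, mul_comm (u ^ 2)]
    have e3 : q / u ^ 2 - q ^ 2 / (1 + q) ^ 2 / u ^ 2 = (q - q ^ 2 / (1 + q) ^ 2) / u ^ 2 := by
      rw [← sub_div]
    rw [e2, e3]
    exact (div_le_div_iff_of_pos_right (by positivity)).mpr hnum2
  have hlow : 3 / 8 ≤ u ^ 2 * (N : ℝ) ^ 2 := by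
    have h1 : (3 / 8) / u ^ 2 ≤ (N : ℝ) ^ 2 := by
      calc (3 / 8) / u ^ 2 ≤ epsAuxG q 0 - epsAuxG q 1 := hg01
        _ ≤ ∑' m : ℕ, (-1 : ℝ) ^ m * q ^ (m + 1) / (1 - q ^ (m + 1)) ^ 2 := hrepr.2
        _ = (N : ℝ) ^ 2 := hAeq
    rw [div_le_iff₀ (by positivity)] at h1
    linarith
  have hlow' : 3 / 8 ≤ (u * (N : ℝ)) ^ 2 := by rw [mul_pow]; exact hlow
  have huNlow : 1 / (2 * (N : ℝ)) ≤ u := by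
    rw [div_le_iff₀ (by positivity)]
    nlinarith only [hlow', mul_nonneg hu.le hNpos.le, sq_nonneg (u * (N : ℝ))]
  have huNhalf : 1 / 2 ≤ u * N := by
    rw [div_le_iff₀ (by positivity : (0:ℝ) < 2 * (N:ℝ))] at huNlow
    nlinarith only [huNlow]
  -- main estimate
  have hmain := epsAux_main_est hq12 hq1
  rw [hAeq, ← hudef] at hmain
  -- log bounds
  have hlogN1 : 1 ≤ Real.log N := by
    rw [Real.le_log_iff_exp_le hNpos]
    have := Real.exp_one_lt_d9
    linarith
  have hlogu : Real.log (1 / u) ≤ 2 * Real.log N := by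
    have h1u : 1 / u ≤ 2 * N := by
      have h2 := one_div_le_one_div_of_le (by positivity : (0:ℝ) < 1 / (2 * (N:ℝ))) huNlow
      have e : 1 / (1 / (2 * (N : ℝ))) = 2 * N := by field_simp
      linarith [e ▸ h2]
    calc Real.log (1 / u) ≤ Real.log (2 * N) := Real.log_le_log (by positivity) h1u
      _ = Real.log 2 + Real.log N := Real.log_mul (by norm_num) (by positivity)
      _ ≤ 2 * Real.log N := by
          have := Real.log_le_sub_one_of_pos (show (0:ℝ) < 2 by norm_num)
          linarith
  have hE : (12 + 3 * Real.log (1 / u)) / u ≤ 36 * N * Real.log N := by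
    have hnum : 12 + 3 * Real.log (1 / u) ≤ 18 * Real.log N := by
      have h0 : 0 ≤ Real.log (1 / u) := Real.log_nonneg (by rw [le_div_iff₀ hu]; linarith)
      linarith
    have hden : 1 / u ≤ 2 * N := by
      have h2 := one_div_le_one_div_of_le (by positivity : (0:ℝ) < 1 / (2 * (N:ℝ))) huNlow
      have e : 1 / (1 / (2 * (N : ℝ))) = 2 * N := by field_simp
      linarith [e ▸ h2]
    calc (12 + 3 * Real.log (1 / u)) / u = (12 + 3 * Real.log (1 / u)) * (1 / u) := by
          rw [mul_one_div]
      _ ≤ (18 * Real.log N) * (2 * N) :=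
          mul_le_mul hnum hden (by positivity) (by positivity)
      _ = 36 * N * Real.log N := by ring
  have h1 : |(N : ℝ) ^ 2 - π ^ 2 / (12 * u ^ 2)| ≤ 36 * N * Real.log N := hmain.trans hE
  have h2 : |π ^ 2 / 12 - u ^ 2 * (N : ℝ) ^ 2| ≤ 144 * Real.log N / N := by
    have e : π ^ 2 / 12 - u ^ 2 * (N : ℝ) ^ 2 = u ^ 2 * (π ^ 2 / (12 * u ^ 2) - N ^ 2) := by
      field_simp
    rw [e, abs_mul, abs_of_nonneg (sq_nonneg u), abs_sub_comm]
    have hu2le : u ^ 2 ≤ (2 / N) ^ 2 := pow_le_pow_left₀ hu.le huN 2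
    calc u ^ 2 * |(N:ℝ) ^ 2 - π ^ 2 / (12 * u ^ 2)| ≤ (2 / N) ^ 2 * (36 * N * Real.log N) :=
          mul_le_mul hu2le h1 (abs_nonneg _) (by positivity)
      _ = 144 * Real.log N / N := by field_simp; ring
  have h3 : |u * N - β| ≤ 288 * Real.log N / N := by
    have hfac : (u * N - β) * (u * N + β) = u ^ 2 * (N:ℝ) ^ 2 - β ^ 2 := by ring
    have hsum : 1 / 2 ≤ u * N + β := by linarith [hβpos, huNhalf]
    have hsum0 : (0:ℝ) ≤ u * N + β := le_trans (by norm_num) hsum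
    have habs : |u * N - β| * (u * N + β) = |u ^ 2 * (N:ℝ) ^ 2 - β ^ 2| := by
      calc |u * N - β| * (u * N + β) = |u * N - β| * |u * N + β| := by
            rw [abs_of_nonneg hsum0]
        _ = |(u * N - β) * (u * N + β)| := (abs_mul _ _).symm
        _ = |u ^ 2 * (N:ℝ) ^ 2 - β ^ 2| := by rw [hfac]
    have hrhs : |u ^ 2 * (N:ℝ) ^ 2 - β ^ 2| ≤ 144 * Real.log N / N := by
      rw [hβ2, abs_sub_comm]
      exact h2
    have hmm := mul_le_mul_of_nonneg_left hsum (abs_nonneg (u * N - β))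
    have hx2 : |u * N - β| * (1 / 2) ≤ 144 * Real.log N / N :=
      le_trans (le_trans hmm (le_of_eq habs)) hrhs
    calc |u * N - β| = 2 * (|u * N - β| * (1 / 2)) := by ring
      _ ≤ 2 * (144 * Real.log N / N) := by
          exact mul_le_mul_of_nonneg_left hx2 (by norm_num)
      _ = 288 * Real.log N / N := by ring
  -- conclusion
  rw [← hqdef]
  have hfin : q - (1 - β / N) = -(u * N - β) / N := by
    rw [hudef]
    field_simp
    ring
  rw [Real.norm_eq_abs, Real.norm_eq_abs, hfin, abs_div, abs_neg, abs_of_nonneg hNpos.le]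
  have hlogabs : |Real.log N / (N:ℝ) ^ 2| = Real.log N / (N:ℝ) ^ 2 :=
    abs_of_nonneg (by positivity)
  rw [hlogabs]
  rw [div_le_iff₀ hNpos]
  have e2 : 288 * (Real.log N / (N:ℝ) ^ 2) * N = 288 * Real.log N / N := by
    field_simp
  rw [e2]
  exact h3
end

section
/- The Vershik curve ψ_U(u) = -(1/α) log(1 - e^{-αu}), α = π/√6, is the unique solution in the class X_U of the ODE ψ'' + α ψ'(1-ψ') = 0, where X_U consists of C^1 functions ψ: (0,∞) → (0,∞) with ψ' < 0, lim_{u↓0} ψ(u) = ∞ and lim_{u→∞} ψ(u) = 0. -/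
set_option maxHeartbeats 1000000

open Real Filter Set

lemma const_on_Ioi_aux (f : ℝ → ℝ) (hf : ∀ u > (0:ℝ), HasDerivAt f 0 u) :
    ∀ a > (0:ℝ), ∀ b > (0:ℝ), f a = f b := by
  have key : ∀ a b : ℝ, 0 < a → a ≤ b → f b = f a := by
    intro a b ha hab
    have hsub : Icc a b ⊆ Ioi (0:ℝ) := fun x hx => lt_of_lt_of_le ha hx.1
    have hcont : ContinuousOn f (Icc a b) := fun x hx =>
      ((hf x (hsub hx)).continuousAt).continuousWithinAt
    have hder : ∀ x ∈ Ico a b, HasDerivWithinAt f 0 (Ici x) x := fun x hx =>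
      (hf x (lt_of_lt_of_le ha hx.1)).hasDerivWithinAt
    exact constant_of_has_deriv_right_zero hcont hder b ⟨hab, le_rfl⟩
  intro a ha b hb
  rcases le_total a b with h | h
  · exact (key a b ha h).symm
  · exact key b a hb h

lemma exp_mul_hasDerivAt (c u : ℝ) :
    HasDerivAt (fun x : ℝ => Real.exp (c * x)) (c * Real.exp (c * u)) u := by
  simpa [mul_comm] using ((hasDerivAt_id u).const_mul c).exp

theorem vershik_curve_U_unique (α : ℝ) (hα : α = Real.pi / Real.sqrt 6)
    (ψ ψ' ψ'' : ℝ → ℝ)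
    (hpos : ∀ u > 0, 0 < ψ u)
    (hderiv : ∀ u > 0, HasDerivAt ψ (ψ' u) u)
    (hderiv2 : ∀ u > 0, HasDerivAt ψ' (ψ'' u) u)
    (hcont : ContinuousOn ψ' (Set.Ioi 0))
    (hneg : ∀ u > 0, ψ' u < 0)
    (hlim0 : Filter.Tendsto ψ (nhdsWithin 0 (Set.Ioi 0)) Filter.atTop)
    (hliminf : Filter.Tendsto ψ Filter.atTop (nhds 0))
    (hode : ∀ u > 0, ψ'' u + α * ψ' u * (1 - ψ' u) = 0) :
    ∀ u > 0, ψ u = -(1 / α) * Real.log (1 - Real.exp (-α * u)) := by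
  have hαpos : 0 < α := by
    rw [hα]; positivity
  obtain ⟨g, hgdef⟩ : ∃ g : ℝ → ℝ, g = fun u => ψ' u / (ψ' u - 1) := ⟨_, rfl⟩
  have hden : ∀ u > (0:ℝ), ψ' u - 1 < 0 := fun u hu => by linarith [hneg u hu]
  have hg01 : ∀ u > (0:ℝ), 0 < g u ∧ g u < 1 := by
    intro u hu
    have h1 := hneg u hu
    have h2 := hden u hu
    rw [hgdef]
    constructor
    · exact div_pos_of_neg_of_neg h1 h2
    · rw [div_lt_one_of_neg h2]; linarith
  have hgd : ∀ u > (0:ℝ), HasDerivAt g (-α * g u) u := by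
    intro u hu
    have h2 := (hden u hu).ne
    have hd : HasDerivAt (fun u => ψ' u / (ψ' u - 1))
        ((ψ'' u * (ψ' u - 1) - ψ' u * ψ'' u) / (ψ' u - 1)^2) u :=
      (hderiv2 u hu).div ((hderiv2 u hu).sub_const 1) h2
    rw [hgdef]
    convert hd using 1
    have hodeu := hode u hu
    have hψ'' : ψ'' u = α * ψ' u * (ψ' u - 1) := by linarith
    rw [hψ'']
    field_simp
    ring
  obtain ⟨h, hhdef⟩ : ∃ h : ℝ → ℝ, h = fun u => g u * Real.exp (α * u) := ⟨_, rfl⟩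
  have hhd : ∀ u > (0:ℝ), HasDerivAt h 0 u := by
    intro u hu
    have he := exp_mul_hasDerivAt α u
    have hd := (hgd u hu).mul he
    rw [hhdef]
    refine hd.congr_deriv ?_
    ring
  obtain ⟨K, hKdef⟩ : ∃ K : ℝ, K = h 1 := ⟨_, rfl⟩
  have hKg : ∀ u > (0:ℝ), g u = K * Real.exp (-α * u) := by
    intro u hu
    have hconst := const_on_Ioi_aux h hhd u hu 1 one_pos
    have hne : Real.exp (α * u) ≠ 0 := (Real.exp_pos _).ne'
    rw [hKdef, ← hconst, hhdef]
    simp only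
    rw [neg_mul, Real.exp_neg]
    field_simp
  have hKpos : 0 < K := by
    have h1 := (hg01 1 one_pos).1
    have h2 := hKg 1 one_pos
    nlinarith [Real.exp_pos (-α * 1)]
  have hKlt : ∀ u > (0:ℝ), K * Real.exp (-α * u) < 1 := fun u hu =>
    (hKg u hu) ▸ (hg01 u hu).2
  have hKle : K ≤ 1 := by
    have hc : Continuous (fun u : ℝ => K * Real.exp (-α * u)) :=
      continuous_const.mul (Real.continuous_exp.comp (continuous_const.mul continuous_id))
    have htend : Filter.Tendsto (fun u : ℝ => K * Real.exp (-α * u))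
        (nhdsWithin 0 (Set.Ioi 0)) (nhds (K * Real.exp (-α * 0))) :=
      (hc.tendsto 0).mono_left nhdsWithin_le_nhds
    rw [mul_zero, Real.exp_zero, mul_one] at htend
    exact le_of_tendsto htend (Filter.eventually_of_mem self_mem_nhdsWithin
      (fun u hu => (hKlt u hu).le))
  have hψ'eq : ∀ u > (0:ℝ), ψ' u = -(K * Real.exp (-α * u)) / (1 - K * Real.exp (-α * u)) := by
    intro u hu
    have hgu := hKg u hu
    rw [hgdef] at hgu
    have h2 := (hden u hu).ne
    have h3 : (1 : ℝ) - K * Real.exp (-α * u) ≠ 0 := by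
      have := hKlt u hu; linarith
    rw [div_eq_iff h2] at hgu
    rw [eq_div_iff h3]
    linear_combination hgu
  obtain ⟨φ, hφdef⟩ : ∃ φ : ℝ → ℝ,
      φ = fun u => -(1/α) * Real.log (1 - K * Real.exp (-α * u)) := ⟨_, rfl⟩
  have hφd : ∀ u > (0:ℝ), HasDerivAt φ (ψ' u) u := by
    intro u hu
    have h3 : (0 : ℝ) < 1 - K * Real.exp (-α * u) := by
      have := hKlt u hu; linarith
    have he : HasDerivAt (fun u : ℝ => 1 - K * Real.exp (-α * u))
        (-(K * (-α * Real.exp (-α * u)))) u :=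
      ((exp_mul_hasDerivAt (-α) u).const_mul K).const_sub 1
    have hl := (he.log h3.ne').const_mul (-(1/α))
    rw [hφdef]
    refine hl.congr_deriv ?_
    rw [hψ'eq u hu]
    rw [show -(K * (-α * Real.exp (-α * u))) = α * (K * Real.exp (-α * u)) from by ring]
    rw [← mul_div_assoc]
    congr 1
    field_simp
  have hdiff : ∀ u > (0:ℝ), HasDerivAt (fun u => ψ u - φ u) 0 u := by
    intro u hu
    exact ((hderiv u hu).sub (hφd u hu)).congr_deriv (sub_self _)
  obtain ⟨C, hCdef⟩ : ∃ C : ℝ, C = ψ 1 - φ 1 := ⟨_, rfl⟩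
  have hψφ : ∀ u > (0:ℝ), ψ u = φ u + C := by
    intro u hu
    have := const_on_Ioi_aux (fun u => ψ u - φ u) hdiff u hu 1 one_pos
    rw [hCdef]
    linarith
  have hφtop : Filter.Tendsto φ Filter.atTop (nhds 0) := by
    have h1 : Filter.Tendsto (fun u : ℝ => K * Real.exp (-α * u)) Filter.atTop (nhds 0) := by
      have h0 : Filter.Tendsto (fun u : ℝ => Real.exp (-α * u)) Filter.atTop (nhds 0) := by
        apply Real.tendsto_exp_atBot.comp
        exact Filter.Tendsto.const_mul_atTop_of_neg (by linarith) Filter.tendsto_id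
      have := h0.const_mul K
      rwa [mul_zero] at this
    have h2 : Filter.Tendsto (fun u : ℝ => 1 - K * Real.exp (-α * u)) Filter.atTop (nhds 1) := by
      have := (tendsto_const_nhds : Filter.Tendsto (fun _ : ℝ => (1:ℝ))
        Filter.atTop (nhds 1)).sub h1
      rwa [sub_zero] at this
    have h3 : Filter.Tendsto (fun u : ℝ => Real.log (1 - K * Real.exp (-α * u)))
        Filter.atTop (nhds 0) := by
      have := (Real.continuousAt_log (by norm_num : (1:ℝ) ≠ 0)).tendsto.comp h2
      rwa [Real.log_one] at this
    have h4 := h3.const_mul (-(1/α))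
    rw [mul_zero] at h4
    rw [hφdef]
    exact h4
  have hC0 : C = 0 := by
    have h1 : Filter.Tendsto ψ Filter.atTop (nhds (0 + C)) := by
      have h0 : Filter.Tendsto (fun u => φ u + C) Filter.atTop (nhds (0 + C)) :=
        hφtop.add tendsto_const_nhds
      apply h0.congr'
      filter_upwards [Filter.eventually_gt_atTop (0:ℝ)] with u hu
      exact (hψφ u hu).symm
    have := tendsto_nhds_unique h1 hliminf
    linarith
  have hK1 : K = 1 := by
    by_contra hne
    have hKlt1 : K < 1 := lt_of_le_of_ne hKle hne
    have h3 : (0 : ℝ) < 1 - K := by linarith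
    have hφ0 : Filter.Tendsto φ (nhdsWithin 0 (Set.Ioi 0))
        (nhds (-(1/α) * Real.log (1 - K))) := by
      have hc : Continuous (fun u : ℝ => 1 - K * Real.exp (-α * u)) :=
        continuous_const.sub (continuous_const.mul
          (Real.continuous_exp.comp (continuous_const.mul continuous_id)))
      have h1 : Filter.Tendsto (fun u : ℝ => 1 - K * Real.exp (-α * u)) (nhds 0)
          (nhds (1 - K * Real.exp (-α * 0))) := hc.tendsto 0
      rw [mul_zero, Real.exp_zero, mul_one] at h1
      have h2 := ((Real.continuousAt_log h3.ne').tendsto.comp h1).const_mul (-(1/α))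
      rw [hφdef]
      exact h2.mono_left nhdsWithin_le_nhds
    have hψ0 : Filter.Tendsto ψ (nhdsWithin 0 (Set.Ioi 0))
        (nhds (-(1/α) * Real.log (1 - K) + C)) := by
      apply (hφ0.add tendsto_const_nhds).congr'
      filter_upwards [self_mem_nhdsWithin] with u hu
      exact (hψφ u hu).symm
    exact (not_tendsto_nhds_of_tendsto_atTop hlim0 _) hψ0
  intro u hu
  rw [hψφ u hu, hC0, hφdef, hK1]
  simp
end

section
/- The map Φ_U defined by Φ_U(ψ)(v) = -ψ'(G_ψ^{-1}(v))/(1 - ψ'(G_ψ^{-1}(v))), with G_ψ(u) = u - ψ(u), is a bijection from X_U to Y_U, with inverse Ψ_U(ρ)(u) = ζ_ρ^+((ζ_ρ^-)^{-1}(u)) where ζ_ρ^-(v) = ∫_{-∞}^v (1-ρ(v'))dv' and ζ_ρ^+(v) = ∫_v^∞ ρ(v')dv'. -/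
/-- Membership in the class `X_U`. -/
def MemXU (ψ : ℝ → ℝ) : Prop :=
  (∀ u > (0:ℝ), 0 < ψ u) ∧
  (∀ u > (0:ℝ), DifferentiableAt ℝ ψ u) ∧
  ContinuousOn (deriv ψ) (Set.Ioi 0) ∧
  (∀ u > (0:ℝ), deriv ψ u < 0) ∧
  Filter.Tendsto ψ (nhdsWithin 0 (Set.Ioi 0)) Filter.atTop ∧
  Filter.Tendsto ψ Filter.atTop (nhds 0)

/-- Membership in the class `Y_U`. -/
def MemYU (ρ : ℝ → ℝ) : Prop :=
  Continuous ρ ∧ (∀ v : ℝ, ρ v ∈ Set.Ioo (0:ℝ) 1) ∧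
  MeasureTheory.IntegrableOn (fun v => 1 - ρ v) (Set.Iic 0) ∧
  MeasureTheory.IntegrableOn ρ (Set.Ici 0) ∧
  ∫ v in Set.Iic (0:ℝ), (1 - ρ v) = ∫ v in Set.Ici (0:ℝ), ρ v

/-- `G_ψ(u) = u - ψ(u)`. -/
noncomputable def Gpsi (ψ : ℝ → ℝ) : ℝ → ℝ := fun u => u - ψ u

/-- The map `Φ_U`. -/
noncomputable def PhiU (ψ : ℝ → ℝ) : ℝ → ℝ := fun v =>
  -(deriv ψ (Function.invFunOn (Gpsi ψ) (Set.Ioi 0) v)) /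
    (1 - deriv ψ (Function.invFunOn (Gpsi ψ) (Set.Ioi 0) v))

/-- `ζ_ρ^-(v) = ∫_{-∞}^v (1-ρ)`. -/
noncomputable def zetaMinus (ρ : ℝ → ℝ) : ℝ → ℝ := fun v => ∫ v' in Set.Iio v, (1 - ρ v')

/-- `ζ_ρ^+(v) = ∫_v^∞ ρ`. -/
noncomputable def zetaPlus (ρ : ℝ → ℝ) : ℝ → ℝ := fun v => ∫ v' in Set.Ioi v, ρ v'

/-- The map `Ψ_U`. -/
noncomputable def PsiU (ρ : ℝ → ℝ) : ℝ → ℝ := fun u =>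
  zetaPlus ρ (Function.invFun (zetaMinus ρ) u)

open Set Filter MeasureTheory Function Topology

lemma partA (ψ : ℝ → ℝ) (hψ : MemXU ψ) :
    MemYU (PhiU ψ) ∧ ∀ u > (0:ℝ), PsiU (PhiU ψ) u = ψ u := by
  obtain ⟨hpos, hdiff, hdc, hdneg, h0, hinf⟩ := hψ
  set G := Gpsi ψ with hGdef
  -- derivative of G
  have hGd : ∀ u ∈ Ioi (0:ℝ), HasDerivAt G (1 - deriv ψ u) u := fun u hu =>
    (hasDerivAt_id u).sub (hdiff u hu).hasDerivAt
  have hGc : ContinuousOn G (Ioi 0) := fun u hu =>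
    ((hGd u hu).continuousAt).continuousWithinAt
  have hGm : StrictMonoOn G (Ioi 0) := by
    apply strictMonoOn_of_deriv_pos (convex_Ioi 0) hGc
    intro x hx
    rw [interior_Ioi] at hx
    rw [(hGd x hx).deriv]
    linarith [hdneg x hx]
  -- surjectivity of G from (0,∞) onto ℝ
  have hGbot : Tendsto G (𝓝[>] (0:ℝ)) atBot := by
    have h1 : Tendsto (fun u : ℝ => -ψ u) (𝓝[>] (0:ℝ)) atBot :=
      tendsto_neg_atTop_atBot.comp h0
    have h2 : Tendsto (fun u : ℝ => u) (𝓝[>] (0:ℝ)) (𝓝 0) :=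
      tendsto_id.mono_left nhdsWithin_le_nhds
    have := h2.add_atBot h1
    exact this.congr (fun u => by simp [hGdef, Gpsi, sub_eq_add_neg])
  have hGtop : Tendsto G atTop atTop := by
    have := tendsto_id.atTop_add (hinf.neg)
    exact this.congr (fun u => by simp [hGdef, Gpsi, sub_eq_add_neg])
  have hsurj : ∀ v : ℝ, ∃ u ∈ Ioi (0:ℝ), G u = v := by
    intro v
    obtain ⟨a, ha, hav⟩ : ∃ a, a ∈ Ioi (0:ℝ) ∧ G a < v := by
      have := (hGbot.eventually (eventually_lt_atBot v)).and self_mem_nhdsWithin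
      obtain ⟨a, h1, h2⟩ := this.exists
      exact ⟨a, h2, h1⟩
    obtain ⟨b, hb1, hb2⟩ := ((hGtop.eventually (eventually_gt_atTop v)).and
      (eventually_ge_atTop a)).exists
    have hab : a ≤ b := hb2
    have hIcc : Icc a b ⊆ Ioi 0 := fun x hx => lt_of_lt_of_le ha hx.1
    have : v ∈ Icc (G a) (G b) := ⟨hav.le, hb1.le⟩
    obtain ⟨u, hu, huv⟩ := intermediate_value_Icc hab (hGc.mono hIcc) this
    exact ⟨u, hIcc hu, huv⟩
  set g := invFunOn G (Ioi 0) with hgdef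
  have hgmem : ∀ v, g v ∈ Ioi (0:ℝ) := fun v => invFunOn_mem (hsurj v)
  have hGg : ∀ v, G (g v) = v := fun v => invFunOn_eq (hsurj v)
  have hgG : ∀ u ∈ Ioi (0:ℝ), g (G u) = u := fun u hu =>
    hGm.injOn (hgmem _) hu (hGg (G u))
  have hgm : StrictMono g := by
    intro v₁ v₂ h
    by_contra h'
    push_neg at h'
    have := hGm.monotoneOn (hgmem v₂) (hgmem v₁) h'
    rw [hGg, hGg] at this
    exact absurd h (not_lt.2 this)
  have hgc : Continuous g := by
    rw [continuous_iff_continuousAt]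
    intro v
    refine (hgm.strictMonoOn univ).continuousAt_of_image_mem_nhds univ_mem ?_
    rw [image_univ]
    exact mem_of_superset (isOpen_Ioi.mem_nhds (hgmem v))
      (fun x hx => ⟨G x, hgG x hx⟩)
  have hgd : ∀ v, HasDerivAt g (1 - deriv ψ (g v))⁻¹ v := fun v =>
    HasDerivAt.of_local_left_inverse hgc.continuousAt (hGd _ (hgmem v))
      (by have := hdneg _ (hgmem v); intro h; linarith [h ▸ this])
      (Filter.Eventually.of_forall hGg)
  have hgbot : Tendsto g atBot (𝓝 0) := by
    rw [tendsto_order]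
    constructor
    · intro a ha
      exact Eventually.of_forall fun v => lt_trans ha (hgmem v)
    · intro a ha
      filter_upwards [eventually_lt_atBot (G a)] with v hv
      by_contra h'
      push_neg at h'
      have := hGm.monotoneOn ha (hgmem v) h'
      rw [hGg] at this
      exact absurd hv (not_lt.2 this)
  have hgtop : Tendsto g atTop atTop := by
    rw [tendsto_atTop]
    intro b
    have hc : max b 1 ∈ Ioi (0:ℝ) := lt_of_lt_of_le one_pos (le_max_right b 1)
    filter_upwards [eventually_ge_atTop (G (max b 1))] with v hv
    by_contra h'
    push_neg at h'
    have h2 : g v < max b 1 := lt_of_lt_of_le h' (le_max_left b 1)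
    have := hGm (hgmem v) hc h2
    rw [hGg] at this
    exact absurd hv (not_le.2 this)
  -- the candidate density ρ
  have hd : ∀ v, deriv ψ (g v) < 0 := fun v => hdneg _ (hgmem v)
  have hd1 : ∀ v, (0:ℝ) < 1 - deriv ψ (g v) := fun v => by linarith [hd v]
  have hρ : ∀ v, PhiU ψ v = -(deriv ψ (g v)) / (1 - deriv ψ (g v)) := fun v => rfl
  have hρmem : ∀ v, PhiU ψ v ∈ Ioo (0:ℝ) 1 := by
    intro v
    rw [hρ v]
    constructor
    · exact div_pos (by linarith [hd v]) (hd1 v)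
    · rw [div_lt_one (hd1 v)]
      linarith [hd v]
  have h1ρ : ∀ v, 1 - PhiU ψ v = (1 - deriv ψ (g v))⁻¹ := by
    intro v
    have h := (hd1 v).ne'
    rw [hρ v]
    field_simp
    ring
  have hρc : Continuous (PhiU ψ) := by
    have hdc' : Continuous (fun v => deriv ψ (g v)) :=
      hdc.comp_continuous hgc hgmem
    exact (hdc'.neg.div (continuous_const.sub hdc')
      (fun v => ne_of_gt (hd1 v)))
  have hgd' : ∀ v, HasDerivAt g (1 - PhiU ψ v) v := fun v => by
    rw [h1ρ v]; exact hgd v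
  have hψg : ∀ v, HasDerivAt (fun w => -ψ (g w)) (PhiU ψ v) v := by
    intro v
    have h1 := ((hdiff _ (hgmem v)).hasDerivAt.comp v (hgd v)).neg
    convert h1 using 1 <;> try rfl
    rw [hρ v, div_eq_mul_inv]
    ring
  have hρ0 : ∀ v, (0:ℝ) ≤ PhiU ψ v := fun v => (hρmem v).1.le
  have h1ρ0 : ∀ v, (0:ℝ) ≤ 1 - PhiU ψ v := fun v => by linarith [(hρmem v).2]
  -- integrability of ρ on (0,∞)
  have hintp : IntegrableOn (PhiU ψ) (Ioi 0) := by
    apply integrableOn_Ioi_of_intervalIntegral_norm_bounded (ψ (g 0)) 0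
      (fun i : ℝ => hρc.integrableOn_Ioc) tendsto_id
    filter_upwards [eventually_ge_atTop (0:ℝ)] with T hT
    have heq : (∫ v in (0:ℝ)..T, ‖PhiU ψ v‖) = ∫ v in (0:ℝ)..T, PhiU ψ v := by
      apply intervalIntegral.integral_congr
      intro x _
      simp only [Real.norm_eq_abs]
      exact abs_of_nonneg (hρ0 x)
    simp only [id_eq]
    rw [heq, intervalIntegral.integral_eq_sub_of_hasDerivAt
      (fun x _ => hψg x) (hρc.intervalIntegrable 0 T)]
    have := hpos _ (hgmem T)
    linarith
  have hintp' : ∀ v : ℝ, IntegrableOn (PhiU ψ) (Ioi v) := by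
    intro v
    rcases le_or_gt 0 v with h | h
    · exact hintp.mono_set (Ioi_subset_Ioi h)
    · have : Ioi v ⊆ Ioc v 0 ∪ Ioi 0 := by
        intro x hx
        rcases le_or_gt x 0 with h' | h'
        · exact Or.inl ⟨hx, h'⟩
        · exact Or.inr h'
      exact (hρc.integrableOn_Ioc.union hintp).mono_set this
  -- integrability of 1-ρ on (-∞,0]
  have h1ρc : Continuous (fun v => 1 - PhiU ψ v) := continuous_const.sub hρc
  have hintm : IntegrableOn (fun v => 1 - PhiU ψ v) (Iic 0) := by
    apply integrableOn_Iic_of_intervalIntegral_norm_bounded (g 0) 0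
      (fun i : ℝ => h1ρc.integrableOn_Ioc) tendsto_id
    filter_upwards [eventually_le_atBot (0:ℝ)] with T hT
    have heq : (∫ v in T..(0:ℝ), ‖1 - PhiU ψ v‖) = ∫ v in T..(0:ℝ), (1 - PhiU ψ v) := by
      apply intervalIntegral.integral_congr
      intro x _
      simp only [Real.norm_eq_abs]
      exact abs_of_nonneg (h1ρ0 x)
    simp only [id_eq]
    rw [heq, intervalIntegral.integral_eq_sub_of_hasDerivAt
      (fun x _ => hgd' x) (h1ρc.intervalIntegrable T 0)]
    have := hgmem T
    simp only [mem_Ioi] at this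
    linarith
  have hintm' : ∀ v : ℝ, IntegrableOn (fun x => 1 - PhiU ψ x) (Iic v) := by
    intro v
    rcases le_or_gt v 0 with h | h
    · exact hintm.mono_set (Iic_subset_Iic.2 h)
    · have : Iic v ⊆ Iic 0 ∪ Ioc 0 v := by
        intro x hx
        rcases le_or_gt x 0 with h' | h'
        · exact Or.inl h'
        · exact Or.inr ⟨h', hx⟩
      exact (hintm.union h1ρc.integrableOn_Ioc).mono_set this
  -- the values of the improper integrals
  have hzm : zetaMinus (PhiU ψ) = g := by
    funext v
    rw [zetaMinus, ← integral_Iic_eq_integral_Iio,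
      integral_Iic_of_hasDerivAt_of_tendsto' (fun x _ => hgd' x) (hintm' v) hgbot]
    simp
  have hzp : ∀ v, zetaPlus (PhiU ψ) v = ψ (g v) := by
    intro v
    have hlim : Tendsto (fun w => -ψ (g w)) atTop (𝓝 (-0)) := (hinf.comp hgtop).neg
    rw [zetaPlus, integral_Ioi_of_hasDerivAt_of_tendsto' (fun x _ => hψg x)
      (hintp' v) hlim]
    simp
  have hg0 : g 0 = ψ (g 0) := by
    have := hGg 0
    simp only [hGdef, Gpsi] at this
    linarith
  refine ⟨⟨hρc, hρmem, hintm, (integrableOn_Ici_iff_integrableOn_Ioi).2 hintp, ?_⟩, ?_⟩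
  · calc ∫ v in Iic (0:ℝ), (1 - PhiU ψ v) = ∫ v in Iio (0:ℝ), (1 - PhiU ψ v) :=
          integral_Iic_eq_integral_Iio
      _ = g 0 := congrFun hzm 0
      _ = ψ (g 0) := hg0
      _ = ∫ v in Ioi (0:ℝ), PhiU ψ v := (hzp 0).symm
      _ = ∫ v in Ici (0:ℝ), PhiU ψ v := integral_Ici_eq_integral_Ioi.symm
  · intro u hu
    have hgu : g (invFun g u) = u := invFun_eq ⟨G u, hgG u hu⟩
    show zetaPlus (PhiU ψ) (invFun (zetaMinus (PhiU ψ)) u) = ψ u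
    rw [hzm, hzp, hgu]

lemma partB (ρ : ℝ → ℝ) (hρ : MemYU ρ) :
    MemXU (PsiU ρ) ∧ ∀ v : ℝ, PhiU (PsiU ρ) v = ρ v := by
  obtain ⟨hc, hmem, hint1, hint2, heq⟩ := hρ
  have hρ0 : ∀ v, 0 < ρ v := fun v => (hmem v).1
  have hρ1 : ∀ v, ρ v < 1 := fun v => (hmem v).2
  have h1ρc : Continuous (fun v => 1 - ρ v) := continuous_const.sub hc
  have hintm : ∀ v : ℝ, IntegrableOn (fun x => 1 - ρ x) (Iic v) := by
    intro v
    rcases le_or_gt v 0 with h | h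
    · exact hint1.mono_set (Iic_subset_Iic.2 h)
    · have hss : Iic v ⊆ Iic 0 ∪ Ioc 0 v := by
        intro x hx
        rcases le_or_gt x 0 with h' | h'
        · exact Or.inl h'
        · exact Or.inr ⟨h', hx⟩
      exact (hint1.union h1ρc.integrableOn_Ioc).mono_set hss
  have hint2' : IntegrableOn ρ (Ioi 0) := hint2.mono_set Ioi_subset_Ici_self
  have hintp : ∀ v : ℝ, IntegrableOn ρ (Ioi v) := by
    intro v
    rcases le_or_gt 0 v with h | h
    · exact hint2'.mono_set (Ioi_subset_Ioi h)
    · have hss : Ioi v ⊆ Ioc v 0 ∪ Ioi 0 := by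
        intro x hx
        rcases le_or_gt x 0 with h' | h'
        · exact Or.inl ⟨hx, h'⟩
        · exact Or.inr h'
      exact (hc.integrableOn_Ioc.union hint2').mono_set hss
  set Z := zetaMinus ρ with hZdef
  set W := zetaPlus ρ with hWdef
  have hZIic : ∀ v : ℝ, Z v = ∫ x in Iic v, (1 - ρ x) := fun v =>
    (integral_Iic_eq_integral_Iio).symm
  -- difference formulas
  have hZeq : ∀ v : ℝ, Z v = Z 0 + ∫ x in (0:ℝ)..v, (1 - ρ x) := by
    intro v
    have h := intervalIntegral.integral_Iic_sub_Iic (hintm 0) (hintm v)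
    rw [← hZIic 0, ← hZIic v] at h
    linarith
  have hWsub : ∀ a b : ℝ, a ≤ b → W a = (∫ x in Ioc a b, ρ x) + W b := by
    intro a b hab
    have hu : Ioc a b ∪ Ioi b = Ioi a := Ioc_union_Ioi_eq_Ioi hab
    have := setIntegral_union (f := ρ) (μ := (volume : Measure ℝ)) (s := Ioc a b)
      (t := Ioi b) (Ioc_disjoint_Ioi (le_refl b)) measurableSet_Ioi
      (hc.integrableOn_Ioc) (hintp b)
    rw [hu] at this
    exact this
  have hWeq : ∀ v : ℝ, W v = W 0 - ∫ x in (0:ℝ)..v, ρ x := by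
    intro v
    rcases le_total 0 v with h | h
    · have := hWsub 0 v h
      rw [intervalIntegral.integral_of_le h]
      linarith
    · have := hWsub v 0 h
      rw [intervalIntegral.integral_symm v 0, intervalIntegral.integral_of_le h]
      linarith
  -- derivatives
  have hZd : ∀ v : ℝ, HasDerivAt Z (1 - ρ v) v := by
    intro v
    have h1 : HasDerivAt (fun v => ∫ x in (0:ℝ)..v, (1 - ρ x)) (1 - ρ v) v :=
      intervalIntegral.integral_hasDerivAt_right (h1ρc.intervalIntegrable 0 v)
        (h1ρc.stronglyMeasurable.stronglyMeasurableAtFilter) h1ρc.continuousAt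
    have h2 := h1.const_add (Z 0)
    have h3 : (fun v => Z 0 + ∫ x in (0:ℝ)..v, (1 - ρ x)) = Z := (funext hZeq).symm
    rwa [h3] at h2
  have hWd : ∀ v : ℝ, HasDerivAt W (-(ρ v)) v := by
    intro v
    have h1 : HasDerivAt (fun v => ∫ x in (0:ℝ)..v, ρ x) (ρ v) v :=
      intervalIntegral.integral_hasDerivAt_right (hc.intervalIntegrable 0 v)
        (hc.stronglyMeasurable.stronglyMeasurableAtFilter) hc.continuousAt
    have h2 := h1.const_sub (W 0)
    have h3 : (fun v => W 0 - ∫ x in (0:ℝ)..v, ρ x) = W := (funext hWeq).symm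
    rwa [h3] at h2
  -- positivity
  have hZpos : ∀ v : ℝ, 0 < Z v := by
    intro v
    rw [hZIic v]
    rw [setIntegral_pos_iff_support_of_nonneg_ae
      (Filter.Eventually.of_forall fun x => by
        simp only [Pi.zero_apply]; linarith [hρ1 x]) (hintm v)]
    have hsupp : support (fun x => 1 - ρ x) ∩ Iic v = Iic v := by
      apply inter_eq_right.2
      intro x _
      simp only [mem_support]
      intro h
      linarith [hρ1 x]
    rw [hsupp, Real.volume_Iic]
    exact ENNReal.zero_lt_top
  have hWpos : ∀ v : ℝ, 0 < W v := by
    intro v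
    rw [hWdef, zetaPlus]
    rw [setIntegral_pos_iff_support_of_nonneg_ae
      (Filter.Eventually.of_forall fun x => by
        simp only [Pi.zero_apply]; exact (hρ0 x).le) (hintp v)]
    have hsupp : support ρ ∩ Ioi v = Ioi v := by
      apply inter_eq_right.2
      intro x _
      simp only [mem_support]
      exact (hρ0 x).ne'
    rw [hsupp, Real.volume_Ioi]
    exact ENNReal.zero_lt_top
  -- limits of Z and W
  have hZ00 : Z 0 = ∫ x in Iic (0:ℝ), (1 - ρ x) := hZIic 0
  have hZ0 : Tendsto Z atBot (𝓝 0) := by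
    have h1 : Tendsto (fun v => ∫ x in v..(0:ℝ), (1 - ρ x)) atBot (𝓝 (Z 0)) := by
      rw [hZ00]
      exact intervalIntegral_tendsto_integral_Iic 0 (hintm 0) tendsto_id
    have h2 : Tendsto (fun v => Z 0 - ∫ x in v..(0:ℝ), (1 - ρ x)) atBot (𝓝 (Z 0 - Z 0)) :=
      tendsto_const_nhds.sub h1
    rw [sub_self] at h2
    apply h2.congr
    intro v
    have h3 := hZeq v
    rw [intervalIntegral.integral_symm v 0] at h3
    linarith
  have hW00 : W 0 = ∫ x in Ioi (0:ℝ), ρ x := rfl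
  have hW0 : Tendsto W atTop (𝓝 0) := by
    have h1 : Tendsto (fun v => ∫ x in (0:ℝ)..v, ρ x) atTop (𝓝 (W 0)) := by
      rw [hW00]
      exact intervalIntegral_tendsto_integral_Ioi 0 (hintp 0) tendsto_id
    have h2 : Tendsto (fun v => W 0 - ∫ x in (0:ℝ)..v, ρ x) atTop (𝓝 (W 0 - W 0)) :=
      tendsto_const_nhds.sub h1
    rw [sub_self] at h2
    apply h2.congr
    intro v
    exact (hWeq v).symm
  have hZtop : Tendsto Z atTop atTop := by
    have hC : ∀ v : ℝ, 0 ≤ v → (∫ x in (0:ℝ)..v, ρ x) ≤ W 0 := by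
      intro v hv
      rw [intervalIntegral.integral_of_le hv, hW00]
      apply setIntegral_mono_set (hintp 0)
        (Filter.Eventually.of_forall fun x => (hρ0 x).le)
      exact HasSubset.Subset.eventuallyLE Ioc_subset_Ioi_self
    apply tendsto_atTop_mono' _ _ (tendsto_atTop_add_const_right atTop (Z 0 - W 0) tendsto_id)
    filter_upwards [eventually_ge_atTop (0:ℝ)] with v hv
    have h1 : (∫ x in (0:ℝ)..v, (1 - ρ x)) = v - ∫ x in (0:ℝ)..v, ρ x := by
      rw [intervalIntegral.integral_sub (intervalIntegrable_const) (hc.intervalIntegrable 0 v)]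
      simp
    have := hZeq v
    have := hC v hv
    simp only [id_eq]
    linarith
  -- the fundamental identity Z - W = id
  have hkey : ∀ x : ℝ, Z x - W x = x := by
    have hdiffF : Differentiable ℝ (fun y => Z y - W y - y) := fun y =>
      (((hZd y).sub (hWd y)).sub (hasDerivAt_id y)).differentiableAt
    have hderivF : ∀ y : ℝ, deriv (fun y => Z y - W y - y) y = 0 := by
      intro y
      have h := ((hZd y).sub (hWd y)).sub (hasDerivAt_id y)
      have h2 : (1 - ρ y) - (-(ρ y)) - 1 = 0 := by ring
      rw [h2] at h
      exact h.deriv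
    have hF0 : Z 0 - W 0 - 0 = 0 := by
      have : Z 0 = W 0 := by
        rw [hZ00, hW00, heq, integral_Ici_eq_integral_Ioi]
      linarith
    intro x
    have := is_const_of_deriv_eq_zero hdiffF hderivF x 0
    rw [hF0] at this
    linarith
  -- Z is a strictly monotone continuous bijection onto (0,∞)
  have hZm : StrictMono Z := strictMono_of_deriv_pos fun x => by
    rw [(hZd x).deriv]; linarith [hρ1 x]
  have hZc : Continuous Z := continuous_iff_continuousAt.2 fun x => (hZd x).continuousAt
  have hsurj : ∀ u : ℝ, 0 < u → ∃ x, Z x = u := by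
    intro u hu
    obtain ⟨a, ha⟩ := (hZ0.eventually_lt_const hu).exists
    obtain ⟨b, hb1, hb2⟩ := ((hZtop.eventually (eventually_gt_atTop u)).and
      (eventually_ge_atTop a)).exists
    obtain ⟨x, _, hx⟩ := intermediate_value_Icc hb2 hZc.continuousOn ⟨ha.le, hb1.le⟩
    exact ⟨x, hx⟩
  set w := invFun Z with hwdef
  have hZw : ∀ u : ℝ, 0 < u → Z (w u) = u := fun u hu => invFun_eq (hsurj u hu)
  have hwZ : ∀ x, w (Z x) = x := leftInverse_invFun hZm.injective
  have hwm : StrictMonoOn w (Ioi 0) := by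
    intro u₁ h₁ u₂ h₂ h
    have := (hZw u₁ h₁).trans_lt (h.trans_eq (hZw u₂ h₂).symm)
    exact hZm.lt_iff_lt.1 this
  have hwc : ∀ u ∈ Ioi (0:ℝ), ContinuousAt w u := by
    intro u hu
    apply hwm.continuousAt_of_image_mem_nhds (isOpen_Ioi.mem_nhds hu)
    have himg : w '' Ioi 0 = univ := eq_univ_of_forall fun x => ⟨Z x, hZpos x, hwZ x⟩
    rw [himg]
    exact univ_mem
  have hwd : ∀ u ∈ Ioi (0:ℝ), HasDerivAt w (1 - ρ (w u))⁻¹ u := by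
    intro u hu
    apply HasDerivAt.of_local_left_inverse (hwc u hu) (hZd (w u))
      (by linarith [hρ1 (w u)])
    filter_upwards [isOpen_Ioi.mem_nhds hu] with y hy using hZw y hy
  -- PsiU ρ = W ∘ w
  have hψeq : PsiU ρ = fun u => W (w u) := rfl
  have hψd : ∀ u ∈ Ioi (0:ℝ), HasDerivAt (PsiU ρ) (-(ρ (w u)) * (1 - ρ (w u))⁻¹) u := by
    intro u hu
    rw [hψeq]
    exact (hWd (w u)).comp u (hwd u hu)
  have hψderiv : ∀ u ∈ Ioi (0:ℝ),
      deriv (PsiU ρ) u = -(ρ (w u)) * (1 - ρ (w u))⁻¹ := fun u hu => (hψd u hu).deriv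
  have hwcont : ContinuousOn w (Ioi 0) := fun u hu => (hwc u hu).continuousWithinAt
  -- limits of w
  have hwbot : Tendsto w (𝓝[>] (0:ℝ)) atBot := by
    rw [tendsto_atBot]
    intro b
    have hZb : (0:ℝ) < Z b := hZpos b
    have hIoo : Ioo (0:ℝ) (Z b) ∈ 𝓝[>] (0:ℝ) := Ioo_mem_nhdsGT hZb
    filter_upwards [hIoo] with u hu
    have : Z (w u) < Z b := by rw [hZw u hu.1]; exact hu.2
    exact (hZm.lt_iff_lt.1 this).le
  have hwtop : Tendsto w atTop atTop := by
    rw [tendsto_atTop]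
    intro b
    filter_upwards [eventually_gt_atTop (Z b)] with u hu
    have hu0 : 0 < u := (hZpos b).trans hu
    have : Z b < Z (w u) := by rw [hZw u hu0]; exact hu
    exact (hZm.lt_iff_lt.1 this).le
  -- MemXU
  have hXU : MemXU (PsiU ρ) := by
    refine ⟨?_, ?_, ?_, ?_, ?_, ?_⟩
    · intro u _
      rw [hψeq]
      exact hWpos (w u)
    · intro u hu
      exact (hψd u hu).differentiableAt
    · apply ContinuousOn.congr
        (f := fun u => -(ρ (w u)) * (1 - ρ (w u))⁻¹) ?_ fun u hu => hψderiv u hu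
      have hρw : ContinuousOn (fun u => ρ (w u)) (Ioi 0) := hc.comp_continuousOn hwcont
      exact (hρw.neg.mul ((continuousOn_const.sub hρw).inv₀
        fun u _ => (by linarith [hρ1 (w u)] : (0:ℝ) < 1 - ρ (w u)).ne'))
    · intro u hu
      rw [hψderiv u hu]
      apply mul_neg_of_neg_of_pos
      · linarith [hρ0 (w u)]
      · exact inv_pos.2 (by linarith [hρ1 (w u)])
    · rw [hψeq]
      have hWbot : Tendsto W atBot atTop := by
        apply tendsto_atTop_mono' _ _ tendsto_neg_atBot_atTop
        apply Filter.Eventually.of_forall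
        intro v
        have := hkey v
        have := hZpos v
        linarith
      exact hWbot.comp hwbot
    · rw [hψeq]
      exact hW0.comp hwtop
  refine ⟨hXU, ?_⟩
  -- second identity
  intro v
  have hG : ∀ u ∈ Ioi (0:ℝ), Gpsi (PsiU ρ) u = w u := by
    intro u hu
    show u - PsiU ρ u = w u
    rw [hψeq]
    have h1 := hkey (w u)
    have h2 := hZw u hu
    simp only at h1 ⊢
    linarith
  have hGsurj : ∀ v : ℝ, ∃ u ∈ Ioi (0:ℝ), Gpsi (PsiU ρ) u = v := by
    intro v
    refine ⟨Z v, hZpos v, ?_⟩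
    rw [hG (Z v) (hZpos v), hwZ v]
  set m := invFunOn (Gpsi (PsiU ρ)) (Ioi 0) v with hmdef
  have hm1 : m ∈ Ioi (0:ℝ) := invFunOn_mem (hGsurj v)
  have hm2 : Gpsi (PsiU ρ) m = v := invFunOn_eq (hGsurj v)
  have hmZ : m = Z v := by
    have h1 : w m = v := by rw [← hG m hm1]; exact hm2
    have h2 : w (Z v) = v := hwZ v
    exact hwm.injOn hm1 (hZpos v) (h1.trans h2.symm)
  have hPhi : PhiU (PsiU ρ) v =
      -(deriv (PsiU ρ) (Z v)) / (1 - deriv (PsiU ρ) (Z v)) := by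
    rw [PhiU, ← hmdef, hmZ]
  rw [hPhi, hψderiv (Z v) (hZpos v), hwZ v]
  have h1 : (1:ℝ) - ρ v ≠ 0 := by linarith [hρ1 v]
  field_simp
  ring

theorem PhiU_bijection_XU_YU :
    (∀ ψ : ℝ → ℝ, MemXU ψ →
      MemYU (PhiU ψ) ∧ ∀ u > (0:ℝ), PsiU (PhiU ψ) u = ψ u) ∧
    (∀ ρ : ℝ → ℝ, MemYU ρ →
      MemXU (PsiU ρ) ∧ ∀ v : ℝ, PhiU (PsiU ρ) v = ρ v) :=
  ⟨partA, partB⟩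
end
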